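/- arXiv:1505.06548 — 6 statements merged into one kernel-verified Lean document; each statement's English description precedes it below -/
import Mathlib

section
/- Let S = F_q[[t]] with q odd, and let F ∈ S[X_0, …, X_n] be a homogeneous polynomial of degree 2 which is a semistable family and whose generic fiber is a smooth quadric (i.e. the image F_K of F in K[X_0,…,X_n], K = F_q((t)), is a nondegenerate quadratic form). Then the total space {F = 0} ⊂ P^n_S is smooth (regular) at every F_q-rational point of the central fiber: for every a ∈ F_q^{n+1} \ {0} with F(a) ≡ 0 (mod t), it is not the case that both F(a) ∈ t²S and ∂F/∂X_i(a) ∈ tS for all i = 0, …, n. -/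
noncomputable section

open MvPolynomial

/-- The linear change of coordinates `X i ↦ ∑ j, M i j • X j` applied to a polynomial. -/
def changeCoords {R : Type} [CommRing R] {m : ℕ}
    (M : Matrix (Fin m) (Fin m) R) (F : MvPolynomial (Fin m) R) : MvPolynomial (Fin m) R :=
  aeval (fun i => ∑ j, C (M i j) * X j) F

/-- `MultGE t F w μ` says that for the weight system `w`, the multiplicity of `F` is at least
`μ`, i.e. `v_t(c_d) + ∑ j, w j * d j ≥ μ` for every monomial `c_d · X^d` of `F` (where `v_t`
is the `t`-adic valuation on the coefficients, expressed through divisibility by powers of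
`t`). -/
def MultGE {R : Type} [CommRing R] {m : ℕ} (t : R)
    (F : MvPolynomial (Fin m) R) (w : Fin m → ℤ) (μ : ℤ) : Prop :=
  ∀ d ∈ F.support, ∀ k : ℕ, (k : ℤ) ≤ μ - ∑ j, w j * (d j : ℤ) → t ^ k ∣ coeff d F

/-- Kollár's semistability for a family of degree-`δ` hypersurfaces over a discrete valuation
ring with uniformizer `t`: for every coordinate change with unit determinant over the DVR and
every weight system `W`, the multiplicity satisfies `mult_W F ≤ δ (∑ w_i) / m`
(`m` = number of variables). -/
def SemistableFamily {R : Type} [CommRing R] {m : ℕ} (t : R) (δ : ℕ)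
    (F : MvPolynomial (Fin m) R) : Prop :=
  ∀ M : Matrix (Fin m) (Fin m) R, IsUnit M.det →
    ∀ (w : Fin m → ℤ) (μ : ℤ), MultGE t (changeCoords M F) w μ →
      (m : ℤ) * μ ≤ (δ : ℤ) * ∑ j, w j


section Aux

variable {R : Type} [CommRing R] {m : ℕ}

lemma degree_single'' (p : Fin m) (k : ℕ) : (Finsupp.single p k).degree = k := by
  rcases eq_or_ne k 0 with h | h
  · simp [h]
  · exact Finsupp.degree_single p k

lemma degree_add'' (d e : Fin m →₀ ℕ) : (d + e).degree = d.degree + e.degree := by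
  have := Finsupp.degree_eq_weight_one (σ := Fin m) (R := ℕ)
  simp only [this, map_add]

lemma classify_deg_two (d : Fin m →₀ ℕ) (h : d.degree = 2) :
    ∃ p q : Fin m, d = Finsupp.single p 1 + Finsupp.single q 1 := by
  classical
  have hc : Multiset.card (Finsupp.toMultiset d) = 2 := by
    rw [Finsupp.card_toMultiset]; exact h
  obtain ⟨p, q, hpq⟩ := Multiset.card_eq_two.mp hc
  refine ⟨p, q, ?_⟩
  have := Finsupp.toMultiset_toFinsupp d
  rw [hpq] at this
  rw [← this]
  ext i
  simp [Multiset.insert_eq_cons, Multiset.toFinsupp_apply, Multiset.count_cons,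
    Multiset.count_singleton, Finsupp.single_apply, eq_comm]
  exact add_comm _ _

lemma mem_support_degree_two {G : MvPolynomial (Fin m) R} (hG : G.IsHomogeneous 2)
    {d : Fin m →₀ ℕ} (hd : d ∈ G.support) : d.degree = 2 := by
  have h1 : coeff d G ≠ 0 := mem_support_iff.mp hd
  have := hG h1
  rw [Finsupp.degree_eq_weight_one]
  exact this

/-- Lemma A -/
lemma eval_single_eq_coeff {G : MvPolynomial (Fin m) R} (hG : G.IsHomogeneous 2) (p : Fin m) :
    eval (Pi.single p (1 : R)) G = coeff (Finsupp.single p 2) G := by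
  classical
  rw [eval_eq]
  rw [Finset.sum_eq_single (Finsupp.single p 2)]
  · rw [Finsupp.support_single_ne_zero _ (by norm_num : (2:ℕ) ≠ 0)]
    simp
  · intro d hd hne
    have hdeg := mem_support_degree_two hG hd
    have hex : ∃ i ∈ d.support, i ≠ p := by
      by_contra hcon
      push_neg at hcon
      have hsub : d.support ⊆ {p} := fun i hi => Finset.mem_singleton.mpr (hcon i hi)
      have hds := Finsupp.support_subset_singleton.mp hsub
      rw [hds, degree_single''] at hdeg
      exact hne (by rw [hds, hdeg])
    obtain ⟨i, hi, hip⟩ := hex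
    have h0 : (Pi.single p (1 : R) : Fin m → R) i = 0 := Pi.single_eq_of_ne hip 1
    have hz : (Pi.single p (1 : R) : Fin m → R) i ^ d i = 0 := by
      rw [h0, zero_pow (Finsupp.mem_support_iff.mp hi)]
    rw [Finset.prod_eq_zero hi hz, mul_zero]
  · intro hns
    rw [notMem_support_iff.mp hns, zero_mul]

/-- Lemma B -/
lemma eval_single_pderiv_eq_coeff {G : MvPolynomial (Fin m) R} (hG : G.IsHomogeneous 2)
    {p q : Fin m} (hpq : p ≠ q) :
    eval (Pi.single p (1 : R)) (pderiv q G) =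
      coeff (Finsupp.single p 1 + Finsupp.single q 1) G := by
  classical
  set b : Fin m →₀ ℕ := Finsupp.single p 1 + Finsupp.single q 1 with hb
  conv_lhs => rw [G.as_sum]
  rw [map_sum, map_sum]
  have key : ∀ d : Fin m →₀ ℕ, eval (Pi.single p (1:R)) (pderiv q (monomial d (coeff d G)))
      = coeff d G * d q *
        (d - Finsupp.single q 1 : Fin m →₀ ℕ).prod
          (fun j k => (Pi.single p (1:R) : Fin m → R) j ^ k) := by
    intro d
    rw [pderiv_monomial, eval_monomial]
  simp only [key]
  rw [Finset.sum_eq_single b]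
  · have h1 : b q = 1 := by
      rw [hb]
      simp [Finsupp.single_apply, hpq]
    have h2 : b - Finsupp.single q 1 = Finsupp.single p 1 := by
      rw [hb, add_tsub_cancel_right]
    rw [h1, h2, Finsupp.prod_single_index (by simp)]
    simp
  · intro d hd hne
    have hdeg := mem_support_degree_two hG hd
    rcases eq_or_ne (d q) 0 with hq0 | hq0
    · rw [hq0]; push_cast; ring
    · have hle : Finsupp.single q 1 ≤ d :=
        Finsupp.single_le_iff.mpr (Nat.one_le_iff_ne_zero.mpr hq0)
      set e : Fin m →₀ ℕ := d - Finsupp.single q 1 with he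
      have hex : ∃ i ∈ e.support, i ≠ p := by
        by_contra hcon
        push_neg at hcon
        have hsub : e.support ⊆ {p} := fun i hi => Finset.mem_singleton.mpr (hcon i hi)
        have hds := Finsupp.support_subset_singleton.mp hsub
        have hdd : d = Finsupp.single p (e p) + Finsupp.single q 1 := by
          rw [← hds, he, tsub_add_cancel_of_le hle]
        rw [hdd, degree_add'', degree_single'', degree_single''] at hdeg
        have hep : e p = 1 := by omega
        rw [hep] at hdd
        exact hne (by rw [hb, hdd])
      obtain ⟨i, hi, hip⟩ := hex
      have h0 : (Pi.single p (1 : R) : Fin m → R) i = 0 := Pi.single_eq_of_ne hip 1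
      have hz : (Pi.single p (1 : R) : Fin m → R) i ^ e i = 0 := by
        rw [h0, zero_pow (Finsupp.mem_support_iff.mp hi)]
      rw [Finsupp.prod, Finset.prod_eq_zero hi hz, mul_zero]
  · intro hns
    rw [notMem_support_iff.mp hns]
    ring

lemma single_two_sub (p : Fin m) :
    (Finsupp.single p 2 - Finsupp.single p 1 : Fin m →₀ ℕ) = Finsupp.single p 1 := by
  ext i
  rcases eq_or_ne i p with rfl | h
  · simp
  · have h' := Ne.symm h
    simp [Finsupp.single_apply, h']

lemma prod_single_one (z : Fin m → R) (j : Fin m) :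
    (Finsupp.single j 1).prod (fun i k => z i ^ k) = z j := by
  rw [Finsupp.prod_single_index (h := fun i k => z i ^ k) (pow_zero (z j)), pow_one]

lemma taylor_monomial (p q : Fin m) (c : R) (x y : Fin m → R) :
    eval (x + y) (monomial (Finsupp.single p 1 + Finsupp.single q 1) c)
      = eval x (monomial (Finsupp.single p 1 + Finsupp.single q 1) c)
        + (∑ i, y i * eval x (pderiv i (monomial (Finsupp.single p 1 + Finsupp.single q 1) c)))
        + eval y (monomial (Finsupp.single p 1 + Finsupp.single q 1) c) := by
  classical
  have hprod : ∀ z : Fin m → R,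
      (Finsupp.single p 1 + Finsupp.single q 1 : Fin m →₀ ℕ).prod (fun j k => z j ^ k)
        = z p * z q := by
    intro z
    rw [Finsupp.prod_add_index' (fun a => pow_zero (z a)) (fun a b₁ b₂ => pow_add (z a) b₁ b₂),
      prod_single_one, prod_single_one]
  have heval : ∀ z : Fin m → R,
      eval z (monomial (Finsupp.single p 1 + Finsupp.single q 1) c) = c * (z p * z q) := by
    intro z
    rw [eval_monomial, hprod]
  rcases eq_or_ne p q with rfl | hpq
  · have hb : (Finsupp.single p 1 + Finsupp.single p 1 : Fin m →₀ ℕ) = Finsupp.single p 2 := by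
      rw [← Finsupp.single_add]
    have hsum : (∑ i, y i * eval x (pderiv i (monomial (Finsupp.single p 1
        + Finsupp.single p 1) c))) = y p * (c * 2 * x p) := by
      rw [Fintype.sum_eq_single p]
      · rw [hb, pderiv_monomial, single_two_sub, Finsupp.single_eq_same, eval_monomial,
          prod_single_one]
        push_cast
        ring
      · intro i hip
        rw [hb, pderiv_monomial, Finsupp.single_eq_of_ne' (Ne.symm hip)]
        simp
    rw [hsum, heval, heval, heval]
    simp only [Pi.add_apply]
    ring
  · have hbp : ((Finsupp.single p 1 + Finsupp.single q 1 : Fin m →₀ ℕ)) p = 1 := by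
      simp [Finsupp.single_apply, Ne.symm hpq]
    have hbq : ((Finsupp.single p 1 + Finsupp.single q 1 : Fin m →₀ ℕ)) q = 1 := by
      simp [Finsupp.single_apply, hpq]
    have hsum : (∑ i, y i * eval x (pderiv i (monomial (Finsupp.single p 1
        + Finsupp.single q 1) c))) = y p * (c * x q) + y q * (c * x p) := by
      have hvanish : ∀ i ∈ Finset.univ, i ∉ ({p, q} : Finset (Fin m)) →
          y i * eval x (pderiv i (monomial (Finsupp.single p 1 + Finsupp.single q 1) c)) = 0 := by
        intro i _ hi
        rw [Finset.mem_insert, Finset.mem_singleton] at hi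
        push_neg at hi
        have hbi : ((Finsupp.single p 1 + Finsupp.single q 1 : Fin m →₀ ℕ)) i = 0 := by
          simp [Finsupp.single_apply, Ne.symm hi.1, Ne.symm hi.2]
        rw [pderiv_monomial, hbi]
        simp
      rw [← Finset.sum_subset (Finset.subset_univ ({p, q} : Finset (Fin m))) hvanish,
        Finset.sum_pair hpq]
      rw [pderiv_monomial, pderiv_monomial, hbp, hbq, add_tsub_cancel_left,
        add_tsub_cancel_right, eval_monomial, eval_monomial,
        prod_single_one, prod_single_one]
      push_cast
      ring
    rw [hsum, heval, heval, heval]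
    simp only [Pi.add_apply]
    ring

/-- MASTER: Taylor expansion for homogeneous quadrics. -/
lemma taylor_deg_two {G : MvPolynomial (Fin m) R} (hG : G.IsHomogeneous 2) (x y : Fin m → R) :
    eval (x + y) G = eval x G + (∑ i, y i * eval x (pderiv i G)) + eval y G := by
  classical
  have h2 : ∀ i, eval x (pderiv i G)
      = ∑ d ∈ G.support, eval x (pderiv i (monomial d (coeff d G))) := by
    intro i
    conv_lhs => rw [G.as_sum]
    rw [map_sum, map_sum]
  have h3 : ∀ z : Fin m → R, eval z G = ∑ d ∈ G.support, eval z (monomial d (coeff d G)) := by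
    intro z
    conv_lhs => rw [G.as_sum]
    rw [map_sum]
  rw [h3 (x + y), h3 x, h3 y]
  simp only [h2, Finset.mul_sum]
  rw [Finset.sum_comm, ← Finset.sum_add_distrib, ← Finset.sum_add_distrib]
  apply Finset.sum_congr rfl
  intro d hd
  obtain ⟨p, q, hpq⟩ := classify_deg_two d (mem_support_degree_two hG hd)
  rw [hpq] at *
  exact taylor_monomial p q (coeff _ G) x y


lemma eval_changeCoords {R : Type} [CommRing R] {m : ℕ}
    (M : Matrix (Fin m) (Fin m) R) (F : MvPolynomial (Fin m) R) (x : Fin m → R) :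
    eval x (changeCoords M F) = eval (fun i => ∑ j, M i j * x j) F := by
  unfold changeCoords
  rw [aeval_def, algebraMap_eq, eval₂_comp_left (eval x) C _ F]
  congr 1
  · ext r : 2
    simp
  · ext i
    simp

lemma changeCoords_isHomogeneous {R : Type} [CommRing R] {m : ℕ}
    (M : Matrix (Fin m) (Fin m) R) {F : MvPolynomial (Fin m) R} (hF : F.IsHomogeneous 2) :
    (changeCoords M F).IsHomogeneous 2 := by
  have := hF.aeval (fun i => ∑ j, C (M i j) * X j) (n := 1) (fun i => ?_)
  · simpa [changeCoords] using this
  · apply MvPolynomial.IsHomogeneous.sum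
    intro j _
    simpa using (isHomogeneous_X R j).C_mul (M i j)


open Matrix in
lemma matrix_exists {K : Type} [Field K] {n : ℕ} (a : Fin (n + 1) → K) (ha : a ≠ 0) :
    ∃ M₀ : Matrix (Fin (n + 1)) (Fin (n + 1)) K,
      (∀ i, M₀ i 0 = a i) ∧ IsUnit M₀.det := by
  obtain ⟨i₀, hi₀⟩ : ∃ i, a i ≠ 0 := by
    by_contra hcon
    push_neg at hcon
    exact ha (funext hcon)
  set σ : Equiv.Perm (Fin (n + 1)) := Equiv.swap 0 i₀ with hσ
  set E : Matrix (Fin (n + 1)) (Fin (n + 1)) K := updateCol 1 0 (a ∘ σ) with hE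
  refine ⟨E.submatrix σ id, fun i => ?_, ?_⟩
  · show E (σ i) 0 = a i
    rw [hE, updateCol_self]
    show a (σ (σ i)) = a i
    rw [hσ, Equiv.swap_apply_self]
  · have hdetE : E.det = a i₀ := by
      have hdecomp : a ∘ σ = a i₀ • (Pi.single 0 1 : Fin (n+1) → K) + (a ∘ σ - a i₀ • (Pi.single 0 1 : Fin (n+1) → K)) := by
        ring_nf
      rw [hE, hdecomp, det_updateCol_add, det_updateCol_smul]
      have h1 : updateCol (1 : Matrix (Fin (n+1)) (Fin (n+1)) K) 0 (Pi.single 0 1 : Fin (n+1) → K) = 1 := by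
        ext i j
        rcases eq_or_ne j 0 with rfl | hj
        · rw [updateCol_self]
          rcases eq_or_ne i 0 with rfl | hi
          · simp
          · simp [Pi.single_eq_of_ne hi, one_apply_ne hi]
        · rw [updateCol_apply, if_neg hj]
      have h2 : det (updateCol (1 : Matrix (Fin (n+1)) (Fin (n+1)) K) 0
          (a ∘ σ - a i₀ • (Pi.single 0 1 : Fin (n+1) → K))) = 0 := by
        apply det_eq_zero_of_row_eq_zero 0
        intro j
        rcases eq_or_ne j 0 with rfl | hj
        · rw [updateCol_self]
          simp [hσ, Equiv.swap_apply_left]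
        · rw [updateCol_apply, if_neg hj, one_apply_ne (Ne.symm hj)]
      rw [h1, h2, det_one, mul_one, add_zero]
    have : (E.submatrix σ id).det = Equiv.Perm.sign σ * E.det := by
      have := det_permute σ E
      simpa [submatrix] using this
    rw [this, hdetE]
    apply IsUnit.mul
    · rcases Int.units_eq_one_or (Equiv.Perm.sign σ) with h | h <;> rw [h] <;> simp
    · exact isUnit_iff_ne_zero.mpr hi₀

end Aux

/-- Let `S = F_q[[t]]` with `q` odd, and let `F` be a semistable family of
quadrics over `S` whose generic fiber is a smooth quadric over `F_q((t))`.  Then the total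
space `{F = 0} ⊂ P^n_S` is regular at each `F_q`-point of the central fiber: for every
nonzero `a ∈ F_q^{n+1}` with `F(a) ≡ 0 (mod t)`, it is not the case that both `F(a) ∈ t²S`
and all partial derivatives `∂F/∂X_i(a) ∈ tS`. -/
theorem semistable_quadric_regular_at_rational_points
    (Fq : Type) [Field Fq] [Fintype Fq] (hq : Odd (Fintype.card Fq))
    (n : ℕ)
    (F : MvPolynomial (Fin (n + 1)) (PowerSeries Fq))
    (hhom : F.IsHomogeneous 2)
    (hss : SemistableFamily (PowerSeries.X : PowerSeries Fq) 2 F)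
    (hgeneric : ∀ a : Fin (n + 1) → LaurentSeries Fq,
      (∀ i, eval a (pderiv i (MvPolynomial.map
        (algebraMap (PowerSeries Fq) (LaurentSeries Fq)) F)) = 0) → a = 0)
    (a : Fin (n + 1) → Fq) (ha : a ≠ 0)
    (hcentral : (PowerSeries.X : PowerSeries Fq) ∣
      eval (fun i => PowerSeries.C (a i)) F) :
    ¬ ((PowerSeries.X : PowerSeries Fq) ^ 2 ∣ eval (fun i => PowerSeries.C (a i)) F ∧
      ∀ i, (PowerSeries.X : PowerSeries Fq) ∣
        eval (fun j => PowerSeries.C (a j)) (pderiv i F)) := by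
  classical
  rintro ⟨h2, hder⟩
  set t : PowerSeries Fq := PowerSeries.X with ht
  obtain ⟨M₀, hM₀col, hM₀det⟩ := matrix_exists a ha
  set M : Matrix (Fin (n + 1)) (Fin (n + 1)) (PowerSeries Fq) :=
    M₀.map (PowerSeries.C (R := Fq)) with hM
  have hMdet : IsUnit M.det := by
    have h1 : IsUnit ((PowerSeries.C (R := Fq)) M₀.det) := hM₀det.map _
    rw [RingHom.map_det] at h1
    exact h1
  set F' : MvPolynomial (Fin (n + 1)) (PowerSeries Fq) := changeCoords M F with hF'def
  have hF' : F'.IsHomogeneous 2 := changeCoords_isHomogeneous M hhom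
  -- the columns of `M`
  set c : Fin (n + 1) → Fin (n + 1) → PowerSeries Fq := fun j i => M i j with hcdef
  have hc0 : c 0 = fun i => PowerSeries.C (a i) := by
    funext i
    simp [hcdef, hM, hM₀col i]
  -- evaluation of `F'` at the standard basis vectors
  have hsingle : ∀ p : Fin (n + 1),
      (fun i => ∑ j, M i j * (Pi.single p (1 : PowerSeries Fq) : Fin (n+1) → PowerSeries Fq) j)
        = c p := by
    intro p
    funext i
    rw [Finset.sum_eq_single p]
    · simp [hcdef]
    · intro j _ hj
      simp [Pi.single_eq_of_ne hj]
    · simp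
  have hev : ∀ x, eval x F' = eval (fun i => ∑ j, M i j * x j) F := fun x =>
    eval_changeCoords M F x
  have hevp : ∀ p : Fin (n + 1),
      eval (Pi.single p (1 : PowerSeries Fq)) F' = eval (c p) F := by
    intro p
    rw [hev, hsingle]
  have hevpq : ∀ p q : Fin (n + 1),
      eval ((Pi.single p (1 : PowerSeries Fq) : Fin (n+1) → PowerSeries Fq)
        + (Pi.single q (1 : PowerSeries Fq) : Fin (n+1) → PowerSeries Fq)) F'
        = eval (c p + c q) F := by
    intro p q
    rw [hev]
    have hx : (fun i => ∑ j, M i j * ((Pi.single p (1 : PowerSeries Fq) : Fin (n+1) → PowerSeries Fq)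
        + (Pi.single q (1 : PowerSeries Fq) : Fin (n+1) → PowerSeries Fq)) j) = c p + c q := by
      funext i
      simp only [Pi.add_apply, mul_add, Finset.sum_add_distrib]
      have h1 := congrFun (hsingle p) i
      have h2 := congrFun (hsingle q) i
      rw [h1, h2]
    rw [hx]
  -- divisibility of the coefficient of X_0 ^ 2
  have hcoeff2 : t ^ 2 ∣ coeff (Finsupp.single 0 2) F' := by
    rw [← eval_single_eq_coeff hF' 0, hevp 0, hc0]
    exact h2
  -- divisibility of the coefficient of X_0 * X_j for j ≠ 0
  have hcoeff1 : ∀ q : Fin (n + 1), q ≠ 0 →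
      t ∣ coeff (Finsupp.single 0 1 + Finsupp.single q 1) F' := by
    intro q hq
    rw [← eval_single_pderiv_eq_coeff hF' (Ne.symm hq)]
    have hm1 := taylor_deg_two hF' (Pi.single 0 (1 : PowerSeries Fq))
      (Pi.single q (1 : PowerSeries Fq))
    have hm2 := taylor_deg_two hhom (c 0) (c q)
    have hcollapse : (∑ i, (Pi.single q (1 : PowerSeries Fq) : Fin (n+1) → PowerSeries Fq) i
        * eval (Pi.single 0 (1 : PowerSeries Fq)) (pderiv i F'))
        = eval (Pi.single 0 (1 : PowerSeries Fq)) (pderiv q F') := by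
      rw [Finset.sum_eq_single q]
      · simp
      · intro j _ hj
        rw [Pi.single_eq_of_ne hj 1, zero_mul]
      · simp
    rw [hcollapse] at hm1
    have hkey : eval (Pi.single 0 (1 : PowerSeries Fq)) (pderiv q F')
        = ∑ i, c q i * eval (c 0) (pderiv i F) := by
      have e1 : eval ((Pi.single 0 (1 : PowerSeries Fq) : Fin (n+1) → PowerSeries Fq)
          + (Pi.single q (1 : PowerSeries Fq) : Fin (n+1) → PowerSeries Fq)) F'
          = eval (c 0 + c q) F := hevpq 0 q
      rw [e1, hm2, hevp 0, hevp q] at hm1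
      exact (add_left_cancel (add_right_cancel hm1)).symm
    rw [hkey]
    apply Finset.dvd_sum
    intro i _
    apply Dvd.dvd.mul_left
    rw [hc0]
    exact hder i
  -- the weight system
  set w : Fin (n + 1) → ℤ := fun i => if i = 0 then -1 else 0 with hw
  have hwsum : ∑ j, w j = -1 := by
    rw [hw, Finset.sum_eq_single 0]
    · simp
    · intro j _ hj
      simp [hj]
    · simp
  have hmult : MultGE t F' w 0 := by
    intro d hdsupp k hk
    have hdw : ∑ j, w j * (d j : ℤ) = -(d 0 : ℤ) := by
      rw [hw, Finset.sum_eq_single 0]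
      · simp
      · intro j _ hj
        simp [hj]
      · simp
    rw [hdw] at hk
    have hkd : k ≤ d 0 := by exact_mod_cast (by linarith : (k : ℤ) ≤ (d 0 : ℤ))
    have hdeg : d.degree = 2 := mem_support_degree_two hF' hdsupp
    obtain ⟨p, q, rfl⟩ := classify_deg_two d hdeg
    rcases eq_or_ne p 0 with rfl | hp <;> rcases eq_or_ne q 0 with rfl | hq2
    · -- d = single 0 2
      have hb : (Finsupp.single (0 : Fin (n+1)) 1 + Finsupp.single (0 : Fin (n+1)) 1)
          = Finsupp.single (0 : Fin (n+1)) 2 := by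
        rw [← Finsupp.single_add]
      have hk2 : k ≤ 2 := by
        simpa [Finsupp.add_apply, Finsupp.single_eq_same] using hkd
      refine dvd_trans (pow_dvd_pow t hk2) ?_
      rw [hb]
      exact hcoeff2
    · -- d = single 0 1 + single q 1
      have hk1 : k ≤ 1 := by
        simpa [Finsupp.add_apply, Finsupp.single_eq_same,
          Finsupp.single_eq_of_ne' hq2] using hkd
      refine dvd_trans (pow_dvd_pow t hk1) ?_
      rw [pow_one]
      exact hcoeff1 q hq2
    · -- d = single p 1 + single 0 1
      have hk1 : k ≤ 1 := by
        simpa [Finsupp.add_apply, Finsupp.single_eq_same,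
          Finsupp.single_eq_of_ne' hp] using hkd
      refine dvd_trans (pow_dvd_pow t hk1) ?_
      rw [pow_one, add_comm (Finsupp.single p 1) (Finsupp.single (0 : Fin (n+1)) 1)]
      exact hcoeff1 p hp
    · -- d 0 = 0
      have hk0 : k = 0 := by
        simpa [Finsupp.add_apply, Finsupp.single_eq_of_ne' hp,
          Finsupp.single_eq_of_ne' hq2] using hkd
      rw [hk0, pow_zero]
      exact one_dvd _
  have := hss M hMdet w 0 hmult
  rw [hwsum] at this
  norm_num at this
end
end

section
/- Let S = F_q[[t]] with q odd, n ≥ 5, and let Q, Q' ∈ S[X_0, …, X_n] be homogeneous of degree 2 forming a semistable pencil whose generic fiber {Q_K = Q'_K = 0} ⊂ P^n_K (K = F_q((t))) is a smooth complete intersection of two quadrics. Let Q_0, Q_0' be the reductions of Q, Q' modulo t. Then for every (λ, μ) ∈ F_q² \ {(0,0)}, the quadratic form λQ_0 + μQ_0' has no linear factor with coefficients in F_q. -/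
noncomputable section

open MvPolynomial

/-- The Plücker coordinate `a_{IJ}` of the wedge `F ∧ G` of two polynomials, in the basis of
wedges of monomials. -/
def wedgeCoeff {R : Type} [CommRing R] {m : ℕ}
    (F G : MvPolynomial (Fin m) R) (I J : (Fin m) →₀ ℕ) : R :=
  coeff I F * coeff J G - coeff J F * coeff I G

/-- `PencilMultGE t F G w μ` says the multiplicity of the pencil spanned by `F, G` at the
weight system `w` is at least `μ`: for every pair `I ≠ J` with `a_{IJ} ≠ 0` one has
`v_t(a_{IJ}) + ∑ j, w j * (I j + J j) ≥ μ`. -/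
def PencilMultGE {R : Type} [CommRing R] {m : ℕ} (t : R)
    (F G : MvPolynomial (Fin m) R) (w : Fin m → ℤ) (μ : ℤ) : Prop :=
  ∀ I J : (Fin m) →₀ ℕ, I ≠ J → wedgeCoeff F G I J ≠ 0 →
    ∀ k : ℕ, (k : ℤ) ≤ μ - ∑ j, w j * ((I j : ℤ) + (J j : ℤ)) → t ^ k ∣ wedgeCoeff F G I J

/-- Kollár-style semistability for a pencil of degree-`δ` forms over a discrete valuation ring
with uniformizer `t`: for every coordinate change with unit determinant over the DVR and every
weight system `W`, `mult_W (F, G) ≤ 2δ(∑ w_i)/m`. -/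
def PencilSemistable {R : Type} [CommRing R] {m : ℕ} (t : R) (δ : ℕ)
    (F G : MvPolynomial (Fin m) R) : Prop :=
  ∀ M : Matrix (Fin m) (Fin m) R, IsUnit M.det →
    ∀ (w : Fin m → ℤ) (μ : ℤ),
      PencilMultGE t (changeCoords M F) (changeCoords M G) w μ →
      (m : ℤ) * μ ≤ 2 * (δ : ℤ) * ∑ j, w j

/-- The canonical map from `F_q[[t]]` to a fixed algebraic closure of `F_q((t))`. -/
def toOmega (Fq : Type) [Field Fq] :
    PowerSeries Fq →+* AlgebraicClosure (LaurentSeries Fq) :=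
  (algebraMap (LaurentSeries Fq) (AlgebraicClosure (LaurentSeries Fq))).comp
    (algebraMap (PowerSeries Fq) (LaurentSeries Fq))

/-- The generic fiber of the pencil `{Q = Q' = 0}` over `F_q((t))` is a smooth complete
intersection of two quadrics: `Q_K, Q'_K` are linearly independent and the Jacobian matrix of
`(Q, Q')` has rank `2` (linearly independent gradients) at every nontrivial common zero over
an algebraic closure of `F_q((t))`. -/
def SmoothCIGenericFiber (Fq : Type) [Field Fq] {m : ℕ}
    (Q Q' : MvPolynomial (Fin m) (PowerSeries Fq)) : Prop :=
  LinearIndependent (LaurentSeries Fq)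
    ![MvPolynomial.map (algebraMap (PowerSeries Fq) (LaurentSeries Fq)) Q,
      MvPolynomial.map (algebraMap (PowerSeries Fq) (LaurentSeries Fq)) Q'] ∧
  ∀ a : Fin m → AlgebraicClosure (LaurentSeries Fq), a ≠ 0 →
    eval a (MvPolynomial.map (toOmega Fq) Q) = 0 →
    eval a (MvPolynomial.map (toOmega Fq) Q') = 0 →
    LinearIndependent (AlgebraicClosure (LaurentSeries Fq))
      ![fun i => eval a (pderiv i (MvPolynomial.map (toOmega Fq) Q)),
        fun i => eval a (pderiv i (MvPolynomial.map (toOmega Fq) Q'))]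

lemma degree_one_single {σ : Type*} (d : σ →₀ ℕ) (h : Finsupp.degree d = 1) :
    ∃ j, d = Finsupp.single j 1 := by
  classical
  have hne : d.support.Nonempty := by
    rcases Finset.eq_empty_or_nonempty d.support with h0 | h0
    · exfalso
      have : d = 0 := by
        ext a
        by_contra ha
        exact (Finset.notMem_empty a) (h0 ▸ Finsupp.mem_support_iff.mpr ha)
      rw [this] at h; simp [Finsupp.degree] at h
    · exact h0
  obtain ⟨j, hj⟩ := hne
  have hsupp : d.support = {j} := by
    apply Finset.eq_singleton_iff_unique_mem.mpr
    refine ⟨hj, fun j' hj' => ?_⟩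
    by_contra hne'
    have hsub : ({j, j'} : Finset σ) ⊆ d.support := by
      intro x hx
      simp only [Finset.mem_insert, Finset.mem_singleton] at hx
      rcases hx with rfl | rfl <;> assumption
    have hle := Finset.sum_le_sum_of_subset hsub (f := fun i => d i)
    have hjj : (∑ i ∈ ({j, j'} : Finset σ), d i) = d j + d j' := by
      rw [Finset.sum_pair (by exact fun hh => hne' hh.symm)]
    have hj1 : 1 ≤ d j := Nat.one_le_iff_ne_zero.mpr (Finsupp.mem_support_iff.mp hj)
    have hj'1 : 1 ≤ d j' := Nat.one_le_iff_ne_zero.mpr (Finsupp.mem_support_iff.mp hj')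
    have h2 : 2 ≤ Finsupp.degree d := by
      calc 2 ≤ d j + d j' := by omega
        _ ≤ Finsupp.degree d := hjj ▸ hle
    omega
  obtain ⟨hdj, hd⟩ := Finsupp.support_eq_singleton.mp hsupp
  have : d j = 1 := by
    have : Finsupp.degree d = d j := by rw [Finsupp.degree_apply, hsupp, Finset.sum_singleton]
    omega
  exact ⟨j, by rw [hd, this]⟩

lemma linear_rep {R : Type} [CommRing R] {m : ℕ} (L : MvPolynomial (Fin m) R)
    (h : L.IsHomogeneous 1) : L = ∑ i, C (coeff (Finsupp.single i 1) L) * X i := by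
  ext d
  rw [coeff_sum]
  simp only [coeff_C_mul, coeff_X']
  by_cases hd : coeff d L = 0
  · rw [hd]
    apply (Finset.sum_eq_zero _).symm
    intro i _
    split
    · next heq => rw [heq, hd, zero_mul]
    · rw [mul_zero]
  · have hdeg : Finsupp.degree d = 1 := by
      have := h hd
      rwa [Finsupp.degree_eq_weight_one]
    obtain ⟨j, rfl⟩ := degree_one_single d hdeg
    have key : ∀ i : Fin m, coeff (Finsupp.single i 1) L *
        (if (Finsupp.single i 1 : Fin m →₀ ℕ) = Finsupp.single j 1 then 1 else 0)
        = if i = j then coeff (Finsupp.single i 1) L else 0 := by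
      intro i
      by_cases hij : i = j
      · subst hij; simp
      · rw [if_neg, mul_zero, if_neg hij]
        exact fun hh => hij ((Finsupp.single_left_inj one_ne_zero).mp hh)
    symm
    rw [Finset.sum_congr rfl (fun i _ => key i),
      Finset.sum_ite_eq' Finset.univ j (fun i => coeff (Finsupp.single i 1) L)]
    simp

lemma map_changeCoords {R S : Type} [CommRing R] [CommRing S] (φ : R →+* S) {m : ℕ}
    (M : Matrix (Fin m) (Fin m) R) (F : MvPolynomial (Fin m) R) :
    MvPolynomial.map φ (changeCoords M F) = changeCoords (M.map φ) (MvPolynomial.map φ F) := by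
  have h : (MvPolynomial.map φ).comp
        (aeval (R := R) (fun i => ∑ j, C (M i j) * X j)).toRingHom
      = ((aeval (R := S) (fun i => ∑ j, C (M.map φ i j) * X j)).toRingHom).comp
          (MvPolynomial.map φ) := by
    apply MvPolynomial.ringHom_ext
    · intro r
      simp [MvPolynomial.algebraMap_eq]
    · intro i
      simp [Matrix.map_apply]
  simpa [changeCoords] using DFunLike.congr_fun h F

def Bmat {K : Type} [Field K] {n : ℕ} (c : Fin (n+1) → K) (i₀ : Fin (n+1)) :
    Matrix (Fin (n+1)) (Fin (n+1)) K :=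
  fun i j => if j = 0 then (if i = i₀ then (c i₀)⁻¹ else 0)
    else (if i = Equiv.swap 0 i₀ j then 1 else 0)
      - (if i = i₀ then (c i₀)⁻¹ * c (Equiv.swap 0 i₀ j) else 0)

def Bmat' {K : Type} [Field K] {n : ℕ} (c : Fin (n+1) → K) (i₀ : Fin (n+1)) :
    Matrix (Fin (n+1)) (Fin (n+1)) K :=
  fun i k => if i = 0 then c k else if i = Equiv.swap 0 i₀ k ∧ k ≠ i₀ then 1 else 0


lemma Bmat_apply_zero {K : Type} [Field K] {n : ℕ} (c : Fin (n+1) → K) (i₀ i : Fin (n+1)) :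
    Bmat c i₀ i 0 = if i = i₀ then (c i₀)⁻¹ else 0 := by
  simp only [Bmat, if_true]

lemma Bmat_apply_ne {K : Type} [Field K] {n : ℕ} (c : Fin (n+1) → K) (i₀ i j : Fin (n+1))
    (hj : j ≠ 0) :
    Bmat c i₀ i j = (if i = Equiv.swap 0 i₀ j then 1 else 0)
      - (if i = i₀ then (c i₀)⁻¹ * c (Equiv.swap 0 i₀ j) else 0) := by
  simp only [Bmat, if_neg hj]

lemma Bmat_col_sum {K : Type} [Field K] {n : ℕ} (c : Fin (n+1) → K) (i₀ : Fin (n+1))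
    (hc : c i₀ ≠ 0) (j : Fin (n+1)) :
    ∑ i, c i * Bmat c i₀ i j = if j = 0 then 1 else 0 := by
  by_cases hj : j = 0
  · subst hj
    have key : ∀ i : Fin (n+1), c i * Bmat c i₀ i 0
        = if i = i₀ then c i * (c i₀)⁻¹ else 0 := by
      intro i
      rw [Bmat_apply_zero]
      simp only [mul_ite, mul_zero]
    simp_rw [key]
    rw [Finset.sum_ite_eq' Finset.univ i₀ (fun i => c i * (c i₀)⁻¹)]
    simp [mul_inv_cancel₀ hc]
  · rw [if_neg hj]
    have key : ∀ i : Fin (n+1), c i * Bmat c i₀ i j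
        = (if i = Equiv.swap 0 i₀ j then c i else 0)
          - (if i = i₀ then c i * ((c i₀)⁻¹ * c (Equiv.swap 0 i₀ j)) else 0) := by
      intro i
      rw [Bmat_apply_ne c i₀ i j hj]
      simp only [mul_sub, mul_ite, mul_one, mul_zero]
    simp_rw [key]
    rw [Finset.sum_sub_distrib,
      Finset.sum_ite_eq' Finset.univ (Equiv.swap 0 i₀ j) (fun i => c i),
      Finset.sum_ite_eq' Finset.univ i₀ (fun i => c i * ((c i₀)⁻¹ * c (Equiv.swap 0 i₀ j)))]
    simp only [Finset.mem_univ, if_true]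
    rw [← mul_assoc, mul_inv_cancel₀ hc, one_mul, sub_self]

lemma Bmat_inv {K : Type} [Field K] {n : ℕ} (c : Fin (n+1) → K) (i₀ : Fin (n+1))
    (hc : c i₀ ≠ 0) : Bmat' c i₀ * Bmat c i₀ = 1 := by
  ext a b
  rw [Matrix.mul_apply]
  by_cases ha : a = 0
  · subst ha
    have key : ∀ k, Bmat' c i₀ 0 k * Bmat c i₀ k b = c k * Bmat c i₀ k b := by
      intro k; rw [Bmat', if_pos rfl]
    simp_rw [key]
    rw [Bmat_col_sum c i₀ hc b, Matrix.one_apply]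
    by_cases hb : b = 0
    · subst hb; simp
    · simp [hb, eq_comm]
  · have hswap : Equiv.swap (0 : Fin (n+1)) i₀ a ≠ i₀ := by
      intro h
      apply ha
      have h2 : Equiv.swap 0 i₀ a = Equiv.swap 0 i₀ 0 := by
        rw [h, Equiv.swap_apply_left]
      exact (Equiv.swap 0 i₀).injective h2
    have key : ∀ k, Bmat' c i₀ a k * Bmat c i₀ k b
        = if k = Equiv.swap 0 i₀ a then Bmat c i₀ k b else 0 := by
      intro k
      rw [Bmat', if_neg ha]
      by_cases hk : k = Equiv.swap 0 i₀ a
      · subst hk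
        rw [if_pos ⟨(Equiv.swap_apply_self 0 i₀ a).symm, hswap⟩, one_mul, if_pos rfl]
      · rw [if_neg, zero_mul, if_neg hk]
        intro hh
        apply hk
        rw [hh.1, Equiv.swap_apply_self]
    simp_rw [key]
    rw [Finset.sum_ite_eq' Finset.univ (Equiv.swap 0 i₀ a) (fun k => Bmat c i₀ k b)]
    simp only [Finset.mem_univ, if_true]
    rw [Matrix.one_apply]
    by_cases hb : b = 0
    · subst hb
      rw [Bmat_apply_zero, if_neg hswap, if_neg ha]
    · rw [Bmat_apply_ne c i₀ _ b hb]
      by_cases hab : a = b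
      · subst hab
        rw [if_pos rfl, if_pos rfl, if_neg hswap, sub_zero]
      · rw [if_neg hab, if_neg, if_neg hswap, sub_zero]
        intro hh
        exact hab ((Equiv.swap 0 i₀).injective hh)

/-- For a semistable pencil of quadrics over `F_q[[t]]` (`q` odd, `n ≥ 5`)
whose generic fiber is a smooth complete intersection of two quadrics, no member of the pencil
of reductions `λQ₀ + μQ₀'` has a linear factor with coefficients in `F_q`. -/
theorem semistable_pencil_central_fiber_no_rational_linear_factor
    (Fq : Type) [Field Fq] [Fintype Fq] (hq : Odd (Fintype.card Fq))
    (n : ℕ) (hn : 5 ≤ n)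
    (Q Q' : MvPolynomial (Fin (n + 1)) (PowerSeries Fq))
    (hQ : Q.IsHomogeneous 2) (hQ' : Q'.IsHomogeneous 2)
    (hss : PencilSemistable (PowerSeries.X : PowerSeries Fq) 2 Q Q')
    (hsmooth : SmoothCIGenericFiber Fq Q Q') :
    ∀ l m : Fq, (l, m) ≠ (0, 0) →
      ¬ ∃ L : MvPolynomial (Fin (n + 1)) Fq, L.IsHomogeneous 1 ∧ L ≠ 0 ∧
        L ∣ (C l * MvPolynomial.map ((PowerSeries.constantCoeff : PowerSeries Fq →+* Fq)) Q +
             C m * MvPolynomial.map ((PowerSeries.constantCoeff : PowerSeries Fq →+* Fq)) Q') := by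
  
  intro l m hlm
  rintro ⟨L, hL1, hLne, D, hD⟩
  classical
  rw [Ne, Prod.mk.injEq, not_and_or] at hlm
  set cc : PowerSeries Fq →+* Fq := PowerSeries.constantCoeff with hcc
  set Cps : Fq →+* PowerSeries Fq := PowerSeries.C with hCps
  set c : Fin (n+1) → Fq := fun i => coeff (Finsupp.single i 1) L with hc_def
  have hex : ∃ i₀, c i₀ ≠ 0 := by
    by_contra hall
    push_neg at hall
    apply hLne
    rw [linear_rep L hL1]
    apply Finset.sum_eq_zero
    intro i _
    rw [show coeff (Finsupp.single i 1) L = c i from rfl, hall i, map_zero, zero_mul]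
  obtain ⟨i₀, hi₀⟩ := hex
  set B := Bmat c i₀ with hB
  set MS : Matrix (Fin (n+1)) (Fin (n+1)) (PowerSeries Fq) := B.map Cps with hMS
  have hdet : IsUnit MS.det := by
    have h1 : (Bmat' c i₀).map (Cps : Fq → PowerSeries Fq) * MS = 1 := by
      rw [hMS, hB, ← Matrix.map_mul, Bmat_inv c i₀ hi₀,
        Matrix.map_one _ (map_zero Cps) (map_one Cps)]
    have h2 : ((Bmat' c i₀).map (Cps : Fq → PowerSeries Fq)).det * MS.det = 1 := by
      rw [← Matrix.det_mul, h1, Matrix.det_one]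
    exact IsUnit.of_mul_eq_one _ (by rw [mul_comm] at h2; exact h2)
  set F := changeCoords MS Q with hF
  set G := changeCoords MS Q' with hG
  have hmapMS : MS.map (cc : PowerSeries Fq → Fq) = B := by
    rw [hMS, Matrix.map_map]
    ext i j
    exact PowerSeries.constantCoeff_C (B i j)
  have hF0 : MvPolynomial.map cc F = changeCoords B (MvPolynomial.map cc Q) := by
    rw [hF, map_changeCoords, hmapMS]
  have hG0 : MvPolynomial.map cc G = changeCoords B (MvPolynomial.map cc Q') := by
    rw [hG, map_changeCoords, hmapMS]
  have hXL : changeCoords B L = X 0 := by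
    conv_lhs => rw [linear_rep L hL1]
    rw [changeCoords, map_sum]
    have step : ∀ i : Fin (n+1),
        (aeval (fun i => ∑ j, C (B i j) * X j)) (C (coeff (Finsupp.single i 1) L) * X i)
          = ∑ j, C (c i * B i j) * X j := by
      intro i
      rw [map_mul, aeval_C, aeval_X, MvPolynomial.algebraMap_eq, Finset.mul_sum]
      apply Finset.sum_congr rfl
      intro j _
      rw [← mul_assoc, ← C_mul]
    rw [Finset.sum_congr rfl (fun i _ => step i), Finset.sum_comm]
    have colstep : ∀ j : Fin (n+1),
        (∑ i, C (c i * B i j) * X j) = C (∑ i, c i * B i j) * X j := by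
      intro j
      rw [← Finset.sum_mul, ← map_sum]
    rw [Finset.sum_congr rfl (fun j _ => colstep j)]
    have laststep : ∀ j : Fin (n+1),
        C (∑ i, c i * B i j) * X j = if j = 0 then X j else 0 := by
      intro j
      rw [hB, Bmat_col_sum c i₀ hi₀ j]
      split
      · rw [map_one, one_mul]
      · rw [map_zero, zero_mul]
    rw [Finset.sum_congr rfl (fun j _ => laststep j),
      Finset.sum_ite_eq' Finset.univ 0 (fun j => X j)]
    simp
  have hH : changeCoords B (C l * MvPolynomial.map cc Q + C m * MvPolynomial.map cc Q')
      = changeCoords B L * changeCoords B D := by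
    rw [hD, changeCoords, changeCoords, changeCoords, map_mul]
  have h2' : changeCoords B (C l * MvPolynomial.map cc Q + C m * MvPolynomial.map cc Q')
      = C l * changeCoords B (MvPolynomial.map cc Q)
        + C m * changeCoords B (MvPolynomial.map cc Q') := by
    simp [changeCoords, MvPolynomial.algebraMap_eq]
  have hHcoeff : ∀ I : (Fin (n+1)) →₀ ℕ, I 0 = 0 →
      l * coeff I (MvPolynomial.map cc F) + m * coeff I (MvPolynomial.map cc G) = 0 := by
    intro I hI0
    have h1 : coeff I (changeCoords B
        (C l * MvPolynomial.map cc Q + C m * MvPolynomial.map cc Q')) = 0 := by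
      rw [hH, hXL, mul_comm, coeff_mul_X']
      rw [if_neg (by simp [Finsupp.mem_support_iff, hI0])]
    rw [h2', coeff_add, coeff_C_mul, coeff_C_mul, ← hF0, ← hG0] at h1
    exact h1
  have hmult : PencilMultGE (PowerSeries.X : PowerSeries Fq) F G
      (fun j => if j = 0 then 1 else 0) 1 := by
    intro I J hIJ hne k hk
    have hsum : ∑ j, (if j = 0 then (1:ℤ) else 0) * ((I j : ℤ) + (J j : ℤ))
        = (I 0 : ℤ) + (J 0 : ℤ) := by
      simp_rw [ite_mul, one_mul, zero_mul]
      rw [Finset.sum_ite_eq' Finset.univ 0 (fun j => (I j : ℤ) + (J j : ℤ))]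
      simp
    rw [hsum] at hk
    by_cases hk0 : k = 0
    · subst hk0; simpa using one_dvd _
    · have hcase : I 0 = 0 ∧ J 0 = 0 ∧ k = 1 := by omega
      obtain ⟨hI0, hJ0, rfl⟩ := hcase
      rw [pow_one, PowerSeries.X_dvd_iff]
      have hcf : ∀ (P : MvPolynomial (Fin (n+1)) (PowerSeries Fq)) (I : (Fin (n+1)) →₀ ℕ),
          cc (coeff I P) = coeff I (MvPolynomial.map cc P) :=
        fun P I => (coeff_map cc P I).symm
      show cc (wedgeCoeff F G I J) = 0
      rw [wedgeCoeff, map_sub, map_mul, map_mul, hcf F I, hcf F J, hcf G I, hcf G J]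
      have e1 := hHcoeff I hI0
      have e2 := hHcoeff J hJ0
      set fI := coeff I (MvPolynomial.map cc F)
      set fJ := coeff J (MvPolynomial.map cc F)
      set gI := coeff I (MvPolynomial.map cc G)
      set gJ := coeff J (MvPolynomial.map cc G)
      rcases hlm with hl | hm
      · have hW : l * (fI * gJ - fJ * gI) = 0 := by linear_combination gJ * e1 - gI * e2
        rcases mul_eq_zero.mp hW with h | h
        · exact absurd h hl
        · exact h
      · have hW : m * (fI * gJ - fJ * gI) = 0 := by linear_combination fI * e2 - fJ * e1
        rcases mul_eq_zero.mp hW with h | h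
        · exact absurd h hm
        · exact h
  have hle := hss MS hdet (fun j => if j = 0 then 1 else 0) 1 hmult
  have hsw : ∑ j : Fin (n+1), (if j = 0 then (1:ℤ) else 0) = 1 := by
    rw [Finset.sum_ite_eq' Finset.univ 0 (fun _ => (1:ℤ))]
    simp
  rw [hsw] at hle
  have : ((n:ℤ) + 1) * 1 ≤ 4 := by push_cast at hle; linarith
  have hn' : (5:ℤ) ≤ (n:ℤ) := by exact_mod_cast hn
  linarith
end
end

section
/- Let S = F_q[[t]] with q odd, n ≥ 5, and let Q, Q' ∈ S[X_0, …, X_n] be homogeneous of degree 2 forming a semistable pencil whose generic fiber is a smooth complete intersection of two quadrics over K = F_q((t)). Let Q_0, Q_0' be the reductions modulo t. If a = (a_0, …, a_n) ∈ S^{n+1} is a formal section (some a_i a unit and Q(a) = Q'(a) = 0), then at the F_q-point ā = a mod t of the central fiber at most one of the quadrics Q_0 = 0 and Q_0' = 0 is singular: it is not the case that both gradients ∇Q_0(ā) and ∇Q_0'(ā) vanish. -/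
noncomputable section

open MvPolynomial

namespace Aux

lemma degree_fin {m : ℕ} (I : Fin m →₀ ℕ) : I.degree = ∑ x, I x :=
  Finset.sum_subset (Finset.subset_univ _)
    (fun x _ hx => Finsupp.notMem_support_iff.1 hx)

lemma pair_le_sum {m : ℕ} (I : Fin m →₀ ℕ) {j x : Fin m} (hjx : j ≠ x) :
    I j + I x ≤ ∑ y, I y := by
  calc I j + I x = ∑ y ∈ ({j, x} : Finset (Fin m)), I y := by
        rw [Finset.sum_insert (by simp [hjx]), Finset.sum_singleton]
    _ ≤ _ := Finset.sum_le_sum_of_subset (Finset.subset_univ _)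

lemma triple_le_sum {m : ℕ} (I : Fin m →₀ ℕ) {j k x : Fin m}
    (hjk : j ≠ k) (hjx : j ≠ x) (hkx : k ≠ x) :
    I j + I k + I x ≤ ∑ y, I y := by
  calc I j + I k + I x = ∑ y ∈ ({j, k, x} : Finset (Fin m)), I y := by
        rw [Finset.sum_insert (by simp [hjk, hjx]),
          Finset.sum_insert (by simp [hkx]), Finset.sum_singleton, add_assoc]
    _ ≤ _ := Finset.sum_le_sum_of_subset (Finset.subset_univ _)

lemma classify2 {m : ℕ} {I : Fin m →₀ ℕ} (h : ∑ x, I x = 2) :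
    ∃ j k : Fin m, I = Finsupp.single j 1 + Finsupp.single k 1 := by
  have hex : ∃ j, I j ≠ 0 := by
    by_contra hc
    push_neg at hc
    rw [Finset.sum_eq_zero (fun x _ => hc x)] at h
    omega
  obtain ⟨j, hj⟩ := hex
  have hj2 : I j ≤ 2 := h ▸ Finset.single_le_sum (fun x _ => Nat.zero_le _) (Finset.mem_univ j)
  rcases Nat.lt_or_ge (I j) 2 with h1 | h2
  · -- I j = 1
    have hj1 : I j = 1 := by omega
    have hk : ∃ k, k ≠ j ∧ I k ≠ 0 := by
      by_contra hc
      push_neg at hc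
      have : ∑ x, I x = I j := Finset.sum_eq_single j
        (fun x _ hx => by by_contra h0; exact h0 (hc x hx))
        (fun hx => absurd (Finset.mem_univ j) hx)
      omega
    obtain ⟨k, hkj, hk0⟩ := hk
    refine ⟨j, k, ?_⟩
    have hIk : I k = 1 := by
      have := pair_le_sum I hkj.symm
      omega
    ext x
    rcases eq_or_ne x j with rfl | hxj
    · simp [Finsupp.single_apply, hkj, hj1]
    · rcases eq_or_ne x k with rfl | hxk
      · simp [Finsupp.single_apply, hxj.symm, hIk]
      · have := triple_le_sum I hkj.symm hxj.symm hxk.symm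
        simp [Finsupp.single_apply, hxj.symm, hxk.symm]
        omega
  · -- I j = 2
    refine ⟨j, j, ?_⟩
    ext x
    rcases eq_or_ne x j with rfl | hxj
    · simp [Finsupp.single_apply]
      omega
    · have := pair_le_sum I hxj.symm
      simp [Finsupp.single_apply, hxj.symm]
      omega

lemma eq_single_two {m : ℕ} {I : Fin m →₀ ℕ} {i : Fin m}
    (h : ∑ x, I x = 2) (hi : I i = 2) : I = Finsupp.single i 2 := by
  ext x
  rcases eq_or_ne x i with rfl | hx
  · simp [hi]
  · have := pair_le_sum I hx.symm
    simp [Finsupp.single_apply, hx.symm]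
    omega

lemma eq_single_add_single {m : ℕ} {I : Fin m →₀ ℕ} {i : Fin m}
    (h : ∑ x, I x = 2) (hi : I i = 1) :
    ∃ r, r ≠ i ∧ I = Finsupp.single i 1 + Finsupp.single r 1 := by
  obtain ⟨j, k, rfl⟩ := classify2 h
  have hjk : (if j = i then 1 else 0) + (if k = i then 1 else 0) = 1 := by
    simpa [Finsupp.single_apply] using hi
  rcases eq_or_ne j i with rfl | hji
  · refine ⟨k, ?_, rfl⟩
    intro hk; simp [hk] at hjk
  · have hki : k = i := by
      by_contra hk; simp [hji, hk] at hjk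
    subst hki
    exact ⟨j, hji, add_comm _ _⟩

lemma pair_ne_single {m : ℕ} {j k i : Fin m} (h : j ≠ i ∨ k ≠ i) :
    Finsupp.single j 1 + Finsupp.single k 1 ≠ Finsupp.single i (2:ℕ) := by
  intro he
  rcases h with h | h
  · have := DFunLike.congr_fun he j
    simp [Finsupp.single_apply, h.symm] at this
  · have := DFunLike.congr_fun he k
    simp [Finsupp.single_apply, h.symm] at this

lemma pair_eq_pair_iff {m : ℕ} {j k i r : Fin m} :
    Finsupp.single j 1 + Finsupp.single k 1 = Finsupp.single i 1 + Finsupp.single r 1 ↔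
      (j = i ∧ k = r) ∨ (j = r ∧ k = i) := by
  constructor
  · intro h
    rcases eq_or_ne j i with rfl | hji
    · left
      exact ⟨rfl, Finsupp.single_left_injective one_ne_zero (add_left_cancel h)⟩
    · have hrj : r = j := by
        have := DFunLike.congr_fun h j
        simp [Finsupp.single_apply, hji.symm] at this
        rcases eq_or_ne r j with h' | h'
        · exact h'
        · simp [h'] at this
      subst hrj
      right
      refine ⟨rfl, ?_⟩
      rw [add_comm (Finsupp.single i 1)] at h
      exact Finsupp.single_left_injective one_ne_zero (add_left_cancel h)
  · rintro (⟨rfl, rfl⟩ | ⟨rfl, rfl⟩)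
    · rfl
    · exact add_comm _ _

end Aux
namespace Aux

variable {R : Type} [CommRing R] {m : ℕ}

lemma monomial_pair (j k : Fin m) (c : R) :
    monomial (Finsupp.single j 1 + Finsupp.single k 1) c = C c * X j * X k := by
  rw [X, X, C_apply, monomial_mul, monomial_mul]
  simp

lemma eval_monomial_pair (j k : Fin m) (c : R) (v : Fin m → R) :
    eval v (monomial (Finsupp.single j 1 + Finsupp.single k 1) c) = c * v j * v k := by
  rw [monomial_pair]
  simp

lemma eval_pderiv_monomial_pair (j k : Fin m) (c : R) (u : Fin m → R) (r : Fin m) :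
    eval u (pderiv r (monomial (Finsupp.single j 1 + Finsupp.single k 1) c)) =
      c * ((if j = r then u k else 0) + (if k = r then u j else 0)) := by
  rw [monomial_pair]
  rcases eq_or_ne j r with h | h <;> rcases eq_or_ne k r with h' | h' <;>
    simp [pderiv_mul, h, h', pderiv_X_self, pderiv_X_of_ne, Pi.single_apply] <;>
    ring

lemma homog_deg_sum {F : MvPolynomial (Fin m) R} (hF : F.IsHomogeneous 2)
    {I : Fin m →₀ ℕ} (hI : coeff I F ≠ 0) : ∑ x, I x = 2 := by
  rw [← degree_fin]
  by_contra h
  exact hI (hF.coeff_eq_zero h)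

lemma single_two_eq (i : Fin m) :
    (Finsupp.single i 2 : Fin m →₀ ℕ) = Finsupp.single i 1 + Finsupp.single i 1 := by
  rw [← Finsupp.single_add]

lemma coeff_single_two_eq_eval {F : MvPolynomial (Fin m) R} (hF : F.IsHomogeneous 2) (i : Fin m) :
    coeff (Finsupp.single i 2) F = eval (Pi.single i 1 : Fin m → R) F := by
  conv_lhs => rw [F.as_sum]
  conv_rhs => rw [F.as_sum]
  rw [coeff_sum, map_sum]
  refine Finset.sum_congr rfl (fun I hI => ?_)
  obtain ⟨j, k, rfl⟩ := classify2 (homog_deg_sum hF (mem_support_iff.1 hI))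
  clear hI
  rw [eval_monomial_pair, coeff_monomial]
  rcases eq_or_ne j i with hj | hj
  · rcases eq_or_ne k i with hk | hk
    · subst hj; subst hk
      rw [if_pos (single_two_eq _).symm]
      simp
    · rw [if_neg fun h => pair_ne_single (Or.inr hk) h]
      simp [Pi.single_eq_of_ne hk]
  · rw [if_neg fun h => pair_ne_single (Or.inl hj) h]
    simp [Pi.single_eq_of_ne hj]

lemma coeff_mixed_eq_polar {F : MvPolynomial (Fin m) R} (hF : F.IsHomogeneous 2)
    {i r : Fin m} (hir : i ≠ r) :
    coeff (Finsupp.single i 1 + Finsupp.single r 1) F =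
      eval (fun x => (Pi.single i 1 : Fin m → R) x + (Pi.single r 1 : Fin m → R) x) F
        - eval (Pi.single i 1 : Fin m → R) F - eval (Pi.single r 1 : Fin m → R) F := by
  conv_lhs => rw [F.as_sum]
  conv_rhs => rw [F.as_sum]
  rw [coeff_sum, map_sum, map_sum, map_sum, ← Finset.sum_sub_distrib, ← Finset.sum_sub_distrib]
  refine Finset.sum_congr rfl (fun I hI => ?_)
  obtain ⟨j, k, rfl⟩ := classify2 (homog_deg_sum hF (mem_support_iff.1 hI))
  clear hI hF
  rw [eval_monomial_pair, eval_monomial_pair, eval_monomial_pair, coeff_monomial]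
  simp only [pair_eq_pair_iff, Pi.single_apply]
  rcases eq_or_ne j i with hji | hji <;> rcases eq_or_ne k r with hkr | hkr <;>
    rcases eq_or_ne j r with hjr | hjr <;> rcases eq_or_ne k i with hki | hki <;>
    subst_vars <;>
    simp_all <;> ring

lemma polar_eq_pderiv {F : MvPolynomial (Fin m) R} (hF : F.IsHomogeneous 2)
    (u : Fin m → R) (r : Fin m) :
    eval (fun x => u x + (Pi.single r 1 : Fin m → R) x) F - eval u F
        - eval (Pi.single r 1 : Fin m → R) F = eval u (pderiv r F) := by
  conv_lhs => rw [F.as_sum]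
  conv_rhs => rw [F.as_sum]
  rw [map_sum, map_sum, map_sum, map_sum, map_sum, ← Finset.sum_sub_distrib,
    ← Finset.sum_sub_distrib]
  refine Finset.sum_congr rfl (fun I hI => ?_)
  obtain ⟨j, k, rfl⟩ := classify2 (homog_deg_sum hF (mem_support_iff.1 hI))
  clear hI hF
  rw [eval_monomial_pair, eval_monomial_pair, eval_monomial_pair, eval_pderiv_monomial_pair]
  simp only [Pi.single_apply]
  rcases eq_or_ne j r with hjr | hjr <;> rcases eq_or_ne k r with hkr | hkr <;>
    subst_vars <;> simp_all <;> ring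

end Aux

namespace Aux

variable {R : Type} [CommRing R] {m : ℕ}

lemma eval_changeCoords (M : Matrix (Fin m) (Fin m) R) (F : MvPolynomial (Fin m) R)
    (v : Fin m → R) :
    eval v (changeCoords M F) = eval (fun i => ∑ j, M i j * v j) F := by
  rw [changeCoords, aeval_def, eval₂_comp_left (eval v)]
  have h1 : (eval v : MvPolynomial (Fin m) R →+* R).comp (algebraMap R (MvPolynomial (Fin m) R))
      = RingHom.id R := by
    ext x
    simp [MvPolynomial.algebraMap_eq]
  rw [h1]
  have h2 : ((eval v : MvPolynomial (Fin m) R →+* R) ∘ fun i => ∑ j, C (M i j) * X j)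
      = fun i => ∑ j, M i j * v j := by
    funext i
    simp [MvPolynomial.algebraMap_eq]
  rw [h2]
  rfl

lemma ringHom_eval {S : Type} [CommRing S] (f : R →+* S) (v : Fin m → R)
    (P : MvPolynomial (Fin m) R) :
    f (eval v P) = eval (fun i => f (v i)) (MvPolynomial.map f P) := by
  rw [MvPolynomial.eval_map]
  rw [show eval v P = eval₂ (RingHom.id R) v P from rfl, eval₂_comp_left]
  congr 1

lemma changeCoords_isHomogeneous (M : Matrix (Fin m) (Fin m) R)
    {F : MvPolynomial (Fin m) R} (hF : F.IsHomogeneous 2) :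
    (changeCoords M F).IsHomogeneous 2 := by
  rw [changeCoords]
  have := hF.aeval (fun i => ∑ j, C (M i j) * X j)
    (fun i => IsHomogeneous.sum _ _ _ (fun j _ => isHomogeneous_C_mul_X _ _))
  simpa using this

end Aux

/-- For a semistable pencil of quadrics over `F_q[[t]]` (`q` odd, `n ≥ 5`)
whose generic fiber is a smooth complete intersection of two quadrics, and a formal section
`a` of the family, at the `F_q`-point `ā = a mod t` of the central fiber at most one of the
two quadrics `Q₀ = 0`, `Q₀' = 0` is singular: the gradients `∇Q₀(ā)` and `∇Q₀'(ā)` do not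
both vanish. -/
theorem semistable_pencil_formal_section_not_both_quadrics_singular
    (Fq : Type) [Field Fq] [Fintype Fq] (hq : Odd (Fintype.card Fq))
    (n : ℕ) (hn : 5 ≤ n)
    (Q Q' : MvPolynomial (Fin (n + 1)) (PowerSeries Fq))
    (hQ : Q.IsHomogeneous 2) (hQ' : Q'.IsHomogeneous 2)
    (hss : PencilSemistable (PowerSeries.X : PowerSeries Fq) 2 Q Q')
    (hsmooth : SmoothCIGenericFiber Fq Q Q')
    (a : Fin (n + 1) → PowerSeries Fq) (ha : ∃ i, IsUnit (a i))
    (haQ : eval a Q = 0) (haQ' : eval a Q' = 0) :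
    ¬ ((∀ i, eval (fun j => (PowerSeries.constantCoeff : PowerSeries Fq →+* Fq) (a j))
          (pderiv i (MvPolynomial.map ((PowerSeries.constantCoeff : PowerSeries Fq →+* Fq)) Q)) = 0) ∧
       (∀ i, eval (fun j => (PowerSeries.constantCoeff : PowerSeries Fq →+* Fq) (a j))
          (pderiv i (MvPolynomial.map ((PowerSeries.constantCoeff : PowerSeries Fq →+* Fq)) Q')) = 0)) := by
  rintro ⟨hg, hg'⟩
  classical
  obtain ⟨i₀, hi₀⟩ := ha
  set M : Matrix (Fin (n+1)) (Fin (n+1)) (PowerSeries Fq) :=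
    (1 : Matrix (Fin (n+1)) (Fin (n+1)) (PowerSeries Fq)).updateCol i₀ a with hM
  have hdet : IsUnit M.det := by
    have h1 : M.det = Matrix.cramer (1 : Matrix (Fin (n+1)) (Fin (n+1)) (PowerSeries Fq)) a i₀ :=
      (Matrix.cramer_apply _ _ _).symm
    rw [h1, Matrix.cramer_one]
    exact hi₀
  have hMcol : ∀ i, M i i₀ = a i := fun i => by
    simp [hM, Matrix.updateCol_apply]
  have hMcol' : ∀ r, r ≠ i₀ → ∀ i, M i r = if i = r then 1 else 0 := fun r hr i => by
    simp [hM, Matrix.updateCol_apply, hr, Matrix.one_apply]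
  set w : Fin (n+1) → ℤ := fun j => if j = i₀ then -1 else 0 with hw
  -- evaluation points transported through the coordinate change
  have hv2 : ∀ P : MvPolynomial (Fin (n+1)) (PowerSeries Fq),
      eval (Pi.single i₀ 1 : Fin (n+1) → PowerSeries Fq) (changeCoords M P) = eval a P := by
    intro P
    rw [Aux.eval_changeCoords]
    have hpt : (fun i => ∑ j, M i j * (Pi.single i₀ 1 : Fin (n+1) → PowerSeries Fq) j) = a := by
      funext i
      rw [Finset.sum_eq_single i₀ (fun x _ hx => by simp [Pi.single_eq_of_ne hx])
        (fun h => absurd (Finset.mem_univ _) h)]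
      simp [hMcol i]
    rw [hpt]
  have hv3 : ∀ (P : MvPolynomial (Fin (n+1)) (PowerSeries Fq)) (r : Fin (n+1)), r ≠ i₀ →
      eval (Pi.single r 1 : Fin (n+1) → PowerSeries Fq) (changeCoords M P)
        = eval (Pi.single r 1 : Fin (n+1) → PowerSeries Fq) P := by
    intro P r hr
    rw [Aux.eval_changeCoords]
    have hpt : (fun i => ∑ j, M i j * (Pi.single r 1 : Fin (n+1) → PowerSeries Fq) j)
        = (Pi.single r 1 : Fin (n+1) → PowerSeries Fq) := by
      funext i
      rw [Finset.sum_eq_single r (fun x _ hx => by simp [Pi.single_eq_of_ne hx])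
        (fun h => absurd (Finset.mem_univ _) h)]
      simp [hMcol' r hr i, Pi.single_apply]
    rw [hpt]
  have hv1 : ∀ (P : MvPolynomial (Fin (n+1)) (PowerSeries Fq)) (r : Fin (n+1)), r ≠ i₀ →
      eval (fun x => (Pi.single i₀ 1 : Fin (n+1) → PowerSeries Fq) x
          + (Pi.single r 1 : Fin (n+1) → PowerSeries Fq) x) (changeCoords M P)
        = eval (fun x => a x + (Pi.single r 1 : Fin (n+1) → PowerSeries Fq) x) P := by
    intro P r hr
    rw [Aux.eval_changeCoords]
    have hpt : (fun i => ∑ j, M i j * ((Pi.single i₀ 1 : Fin (n+1) → PowerSeries Fq) j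
        + (Pi.single r 1 : Fin (n+1) → PowerSeries Fq) j))
        = fun x => a x + (Pi.single r 1 : Fin (n+1) → PowerSeries Fq) x := by
      funext i
      simp only [mul_add, Finset.sum_add_distrib]
      congr 1
      · rw [Finset.sum_eq_single i₀ (fun x _ hx => by simp [Pi.single_eq_of_ne hx])
          (fun h => absurd (Finset.mem_univ _) h)]
        simp [hMcol i]
      · rw [Finset.sum_eq_single r (fun x _ hx => by simp [Pi.single_eq_of_ne hx])
          (fun h => absurd (Finset.mem_univ _) h)]
        simp [hMcol' r hr i, Pi.single_apply]
    rw [hpt]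
  -- key divisibility estimate for the coefficients of the transformed forms
  have key : ∀ P : MvPolynomial (Fin (n+1)) (PowerSeries Fq), P.IsHomogeneous 2 →
      eval a P = 0 →
      (∀ i, eval (fun j => (PowerSeries.constantCoeff : PowerSeries Fq →+* Fq) (a j))
        (pderiv i (MvPolynomial.map ((PowerSeries.constantCoeff : PowerSeries Fq →+* Fq)) P)) = 0) →
      ∀ I : Fin (n+1) →₀ ℕ,
        (PowerSeries.X : PowerSeries Fq) ^ (I i₀) ∣ coeff I (changeCoords M P) := by
    intro P hP hPa hPgrad I
    by_cases hI : coeff I (changeCoords M P) = 0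
    · rw [hI]; exact dvd_zero _
    have hCh : (changeCoords M P).IsHomogeneous 2 := Aux.changeCoords_isHomogeneous M hP
    have hI2 : ∑ x, I x = 2 := Aux.homog_deg_sum hCh hI
    have hle : I i₀ ≤ 2 := hI2 ▸ Finset.single_le_sum (fun x _ => Nat.zero_le _)
      (Finset.mem_univ i₀)
    have hsplit : I i₀ = 0 ∨ I i₀ = 1 ∨ I i₀ = 2 := by omega
    rcases hsplit with h0 | h1 | h2
    · rw [h0, pow_zero]; exact one_dvd _
    · rw [h1, pow_one, PowerSeries.X_dvd_iff]
      obtain ⟨r, hr, rfl⟩ := Aux.eq_single_add_single hI2 h1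
      rw [Aux.coeff_mixed_eq_polar hCh (Ne.symm hr), hv1 P r hr, hv2 P, hv3 P r hr]
      rw [map_sub, map_sub, Aux.ringHom_eval, Aux.ringHom_eval, Aux.ringHom_eval]
      have hpt1 : (fun i => (PowerSeries.constantCoeff : PowerSeries Fq →+* Fq)
          (a i + (Pi.single r 1 : Fin (n+1) → PowerSeries Fq) i))
          = fun i => (fun j => (PowerSeries.constantCoeff : PowerSeries Fq →+* Fq) (a j)) i
            + (Pi.single r 1 : Fin (n+1) → Fq) i := by
        funext i
        rw [map_add, Pi.single_apply, Pi.single_apply, apply_ite ((PowerSeries.constantCoeff : PowerSeries Fq →+* Fq)),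
          map_one, map_zero]
      have hpt3 : (fun i => (PowerSeries.constantCoeff : PowerSeries Fq →+* Fq)
          ((Pi.single r 1 : Fin (n+1) → PowerSeries Fq) i))
          = (Pi.single r 1 : Fin (n+1) → Fq) := by
        funext i
        rw [Pi.single_apply, Pi.single_apply, apply_ite ((PowerSeries.constantCoeff : PowerSeries Fq →+* Fq)),
          map_one, map_zero]
      rw [hpt1, hpt3]
      rw [Aux.polar_eq_pderiv (hP.map _) (fun j => (PowerSeries.constantCoeff : PowerSeries Fq →+* Fq) (a j)) r]
      exact hPgrad r
    · obtain rfl := Aux.eq_single_two hI2 h2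
      rw [Aux.coeff_single_two_eq_eval hCh, hv2 P, hPa]
      exact dvd_zero _
  -- semistability is violated at weight w and μ = 0
  have hmult : PencilMultGE (PowerSeries.X : PowerSeries Fq)
      (changeCoords M Q) (changeCoords M Q') w 0 := by
    intro I J hIJ hne k hk
    have hsum : ∑ j, w j * ((I j : ℤ) + (J j : ℤ)) = -((I i₀ : ℤ) + (J i₀ : ℤ)) := by
      rw [hw]
      simp [ite_mul]
    rw [hsum] at hk
    have hkle : k ≤ I i₀ + J i₀ := by
      push_cast at hk
      omega
    have hdvd : (PowerSeries.X : PowerSeries Fq) ^ (I i₀ + J i₀) ∣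
        wedgeCoeff (changeCoords M Q) (changeCoords M Q') I J := by
      rw [wedgeCoeff]
      apply dvd_sub
      · rw [pow_add]
        exact mul_dvd_mul (key Q hQ haQ hg I) (key Q' hQ' haQ' hg' J)
      · rw [add_comm (I i₀), pow_add]
        exact mul_dvd_mul (key Q hQ haQ hg J) (key Q' hQ' haQ' hg' I)
    exact (pow_dvd_pow _ hkle).trans hdvd
  have hcon := hss M hdet w 0 hmult
  have hwsum : ∑ j, w j = -1 := by
    rw [hw]
    simp
  rw [hwsum] at hcon
  norm_num at hcon
end
end

section
/- Let k be an algebraically closed field, n ≥ 5, and let F ∈ k[X_0, …, X_n] be a cubic form defining a smooth cubic hypersurface (F has no nonzero zero at which all partial derivatives vanish). Then the intersection of {F = 0} with any two hyperplanes is reduced: for any two linearly independent linear forms L_1, L_2 over k, the restriction of F to the codimension-2 linear subspace {L_1 = L_2 = 0} (i.e. F ∘ ι for any linear isomorphism ι : k^{n-1} → {L_1 = L_2 = 0} ⊂ k^{n+1}) is a squarefree cubic form, i.e. not divisible by the square of any nonconstant polynomial. -/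
open MvPolynomial

namespace SmoothCubicAux


variable {k : Type} [Field k]

lemma eval_aeval' {σ τ : Type*} (y : τ → k) (g : σ → MvPolynomial τ k)
    (F : MvPolynomial σ k) :
    eval y (aeval g F) = eval (fun i => eval y (g i)) F := by
  rw [aeval_def, eval_eval₂]
  have h : (eval y).comp (algebraMap k (MvPolynomial τ k)) = RingHom.id k := by
    ext r; simp
  rw [h, eval₂_id]

lemma chain_rule {σ τ : Type*} [Fintype σ] [DecidableEq σ] [DecidableEq τ]
    (g : σ → MvPolynomial τ k) (F : MvPolynomial σ k) (j : τ) :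
    pderiv j (aeval g F) = ∑ i, aeval g (pderiv i F) * pderiv j (g i) := by
  induction F using MvPolynomial.induction_on with
  | C a => simp
  | add p q hp hq => simp only [map_add, add_mul, Finset.sum_add_distrib, hp, hq]
  | mul_X p i hp =>
    rw [map_mul, aeval_X, pderiv_mul, hp]
    have : ∀ i' : σ, aeval g (pderiv i' (p * X i)) * pderiv j (g i') =
        aeval g (pderiv i' p) * pderiv j (g i') * g i
          + (if i' = i then aeval g p * pderiv j (g i) else 0) := by
      intro i'
      rw [pderiv_mul, map_add, map_mul, map_mul, aeval_X, pderiv_X]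
      rcases eq_or_ne i' i with rfl | hne
      · simp; ring
      · simp [Pi.single_eq_of_ne' (Ne.symm hne) ,hne]
        ring
    rw [Finset.sum_congr rfl fun i' _ => this i']
    rw [Finset.sum_add_distrib, Finset.sum_ite_eq' Finset.univ i
      (fun _ => aeval g p * pderiv j (g i))]
    simp [Finset.sum_mul]
    try ring

lemma degree_add (u v : σ →₀ ℕ) : (u + v).degree = u.degree + v.degree := by
  simp [Finsupp.degree_eq_weight_one, map_add]

lemma degree_of_mem_support {σ : Type*} {q : MvPolynomial σ k} {d : ℕ}
    (hq : q.IsHomogeneous d) {u : σ →₀ ℕ} (hu : u ∈ q.support) : u.degree = d := by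
  rw [Finsupp.degree_eq_weight_one]
  exact hq (mem_support_iff.mp hu)

lemma pderiv_isHomogeneous {σ : Type*} [DecidableEq σ] {q : MvPolynomial σ k} {d : ℕ}
    (hq : q.IsHomogeneous (d + 1)) (i : σ) : (pderiv i q).IsHomogeneous d := by
  conv_lhs => rw [q.as_sum]
  rw [map_sum]
  apply MvPolynomial.IsHomogeneous.sum
  intro u hu
  rw [pderiv_monomial]
  rcases eq_or_ne (u i) 0 with h0 | h0
  · rw [h0]
    simp only [Nat.cast_zero, mul_zero, map_zero]
    exact isHomogeneous_zero _ _ _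
  · apply isHomogeneous_monomial
    have h1 : u = (u - Finsupp.single i 1) + Finsupp.single i 1 := by
      ext j
      rcases eq_or_ne j i with rfl | hne
      · simp [Finsupp.single_eq_same]; omega
      · simp [Finsupp.single_eq_of_ne' (Ne.symm hne)]
    have h2 : (Finsupp.single i 1 : σ →₀ ℕ).degree = 1 := by
      simp [Finsupp.degree_apply, Finsupp.support_single_ne_zero]
    have h3 := degree_of_mem_support hq hu
    rw [h1, degree_add, h2] at h3
    omega



variable {k : Type} [Field k]

lemma degree_add' (u v : σ →₀ ℕ) : (u + v).degree = u.degree + v.degree := by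
  simp [Finsupp.degree_eq_weight_one, map_add]

lemma coeff_zero_of_degree_gt {σ : Type*} {f : MvPolynomial σ k} {u : σ →₀ ℕ}
    (h : f.totalDegree < u.degree) : coeff u f = 0 :=
  coeff_eq_zero_of_totalDegree_lt h

lemma top_mul {σ : Type*} [DecidableEq σ] (a b : MvPolynomial σ k) :
    homogeneousComponent (a.totalDegree + b.totalDegree) (a * b) =
      homogeneousComponent a.totalDegree a * homogeneousComponent b.totalDegree b := by
  ext u
  rw [coeff_homogeneousComponent]
  rcases eq_or_ne u.degree (a.totalDegree + b.totalDegree) with hu | hu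
  · rw [if_pos hu, coeff_mul, coeff_mul]
    apply Finset.sum_congr rfl
    rintro ⟨v, w⟩ hvw
    rw [Finset.HasAntidiagonal.mem_antidiagonal] at hvw
    have hdeg : v.degree + w.degree = a.totalDegree + b.totalDegree := by
      rw [← degree_add', hvw, hu]
    rw [coeff_homogeneousComponent, coeff_homogeneousComponent]
    rcases lt_trichotomy v.degree a.totalDegree with hv | hv | hv
    · have hw : b.totalDegree < w.degree := by omega
      have : coeff w b = 0 := coeff_zero_of_degree_gt hw
      simp [this, if_neg (by omega : ¬ w.degree = b.totalDegree)]
    · have hw : w.degree = b.totalDegree := by omega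
      rw [if_pos hv, if_pos hw]
    · have : coeff v a = 0 := coeff_zero_of_degree_gt hv
      simp [this, if_neg (by omega : ¬ v.degree = a.totalDegree)]
  · rw [if_neg hu]
    exact (((homogeneousComponent_isHomogeneous a.totalDegree a).mul
      (homogeneousComponent_isHomogeneous b.totalDegree b)).coeff_eq_zero hu).symm

lemma top_ne_zero {σ : Type*} {f : MvPolynomial σ k} (hf : f ≠ 0) :
    homogeneousComponent f.totalDegree f ≠ 0 := by
  obtain ⟨u, hu, hdeg⟩ : ∃ u ∈ f.support, u.degree = f.totalDegree := by
    have hne : f.support.Nonempty := support_nonempty.mpr hf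
    obtain ⟨u, hu, h⟩ := Finset.exists_mem_eq_sup f.support hne
      (fun u => u.sum fun _ e => e)
    refine ⟨u, hu, ?_⟩
    rw [MvPolynomial.totalDegree, h]
    simp [Finsupp.degree_apply, Finsupp.sum]
  intro h0
  have : coeff u (homogeneousComponent f.totalDegree f) = coeff u f := by
    rw [coeff_homogeneousComponent, if_pos hdeg]
  rw [h0] at this
  exact (mem_support_iff.mp hu) (by simpa using this.symm)

/-- If a nonzero homogeneous polynomial of degree `d` factors as `a * b`, then it also
factors as the product of the top homogeneous components of `a` and `b`. -/
lemma homogeneous_factor {σ : Type*} {G a b : MvPolynomial σ k} {d : ℕ}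
    (hG : G.IsHomogeneous d) (hG0 : G ≠ 0) (hab : G = a * b) :
    G = homogeneousComponent a.totalDegree a * homogeneousComponent b.totalDegree b ∧
      a.totalDegree + b.totalDegree = d := by
  have ha0 : a ≠ 0 := fun h => hG0 (by simp [hab, h])
  have hb0 : b ≠ 0 := fun h => hG0 (by simp [hab, h])
  have htd : G.totalDegree = d := hG.totalDegree hG0
  classical
  have hle : d ≤ a.totalDegree + b.totalDegree := by
    rw [← htd, hab]; exact totalDegree_mul a b
  have hcomp : homogeneousComponent (a.totalDegree + b.totalDegree) G =
      homogeneousComponent a.totalDegree a * homogeneousComponent b.totalDegree b := by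
    rw [hab, top_mul]
  have heq : a.totalDegree + b.totalDegree = d := by
    by_contra hne
    have hlt : G.totalDegree < a.totalDegree + b.totalDegree := by omega
    rw [MvPolynomial.homogeneousComponent_eq_zero _ G hlt] at hcomp
    exact mul_ne_zero (top_ne_zero ha0) (top_ne_zero hb0) hcomp.symm
  refine ⟨?_, heq⟩
  rw [← hcomp, heq, homogeneousComponent_of_mem (by exact hG)]
  simp



variable {k : Type} [Field k]

lemma eval_aeval'' {σ τ : Type*} (y : τ → k) (g : σ → MvPolynomial τ k)
    (F : MvPolynomial σ k) :
    eval y (aeval g F) = eval (fun i => eval y (g i)) F := by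
  rw [aeval_def, eval_eval₂]
  have h : (eval y).comp (algebraMap k (MvPolynomial τ k)) = RingHom.id k := by
    ext r; simp
  rw [h, eval₂_id]

lemma degree_of_mem_support' {σ : Type*} {q : MvPolynomial σ k} {d : ℕ}
    (hq : q.IsHomogeneous d) {u : σ →₀ ℕ} (hu : u ∈ q.support) : u.degree = d := by
  rw [Finsupp.degree_eq_weight_one]
  exact hq (mem_support_iff.mp hu)

lemma eval_fin2 (R : MvPolynomial (Fin 2) k) (x : Fin 2 → k) :
    eval x R = ∑ u ∈ R.support, coeff u R * (x 0 ^ u 0 * x 1 ^ u 1) := by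
  conv_lhs => rw [R.as_sum]
  rw [map_sum]
  apply Finset.sum_congr rfl
  intro u _
  rw [eval_monomial]
  congr 1
  rw [Finsupp.prod_fintype _ _ (fun i => pow_zero _)]
  exact Fin.prod_univ_two _

lemma fin2_degree (u : Fin 2 →₀ ℕ) : u.degree = u 0 + u 1 := by
  classical
  rw [Finsupp.degree_apply]
  rw [Finset.sum_subset (Finset.subset_univ u.support)
    (by intro x _ hx; simpa using Finsupp.notMem_support_iff.mp hx)]
  exact Fin.sum_univ_two u

/-- Quadratic forms in two variables: evaluation along a "line". -/
lemma quad_eval (R : MvPolynomial (Fin 2) k) (hR : R.IsHomogeneous 2) (s t : k) :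
    eval ![s, t] R = eval ![1, 0] R * s ^ 2
      + (eval ![1, 1] R - eval ![1, 0] R - eval ![0, 1] R) * (s * t)
      + eval ![0, 1] R * t ^ 2 := by
  simp only [eval_fin2]
  rw [← Finset.sum_sub_distrib, ← Finset.sum_sub_distrib, Finset.sum_mul, Finset.sum_mul,
    Finset.sum_mul, ← Finset.sum_add_distrib, ← Finset.sum_add_distrib]
  apply Finset.sum_congr rfl
  intro u hu
  have hdeg : u 0 + u 1 = 2 := by
    rw [← fin2_degree]; exact degree_of_mem_support' hR hu
  have h0 : u 0 ≤ 2 := by omega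
  simp only [Matrix.cons_val_zero, Matrix.cons_val_one, Matrix.head_cons]
  interval_cases h : (u 0) <;>
    · have h1 : u 1 = 2 - u 0 := by omega
      rw [h] at h1
      norm_num at h1
      rw [h1] <;> norm_num <;> ring

/-- A binary form of positive degree over an algebraically closed field
has a nontrivial zero. -/
lemma binary_zero [IsAlgClosed k] (B : MvPolynomial (Fin 2) k) {d : ℕ}
    (hB : B.IsHomogeneous d) (hd : 1 ≤ d) :
    ∃ z : Fin 2 → k, z ≠ 0 ∧ eval z B = 0 := by
  classical
  set f : Polynomial k := ∑ u ∈ B.support, Polynomial.C (coeff u B) * Polynomial.X ^ (u 0)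
    with hf
  have heval : ∀ t : k, eval ![t, 1] B = f.eval t := by
    intro t
    rw [eval_fin2, hf]
    rw [Polynomial.eval_finset_sum]
    apply Finset.sum_congr rfl
    intro u _
    simp
  by_cases hnd : f.natDegree = 0
  · -- constant case : the point (1,0) is a zero
    refine ⟨![1, 0], ?_, ?_⟩
    · intro h
      have := congr_fun h 0
      simp at this
    · have hcoeff : f.coeff d = 0 :=
        Polynomial.coeff_eq_zero_of_natDegree_lt (by omega)
      rw [eval_fin2]
      simp only [Matrix.cons_val_zero, Matrix.cons_val_one, Matrix.head_cons]
      have : ∀ u ∈ B.support, coeff u B * ((1:k) ^ u 0 * 0 ^ u 1) =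
          coeff u B * (if u 0 = d then 1 else 0) := by
        intro u hu
        have hdeg : u 0 + u 1 = d := by
          rw [← fin2_degree]; exact degree_of_mem_support' hB hu
        rcases Nat.eq_zero_or_pos (u 1) with h1 | h1
        · rw [h1]
          rw [if_pos (by omega)]
          norm_num
        · rw [if_neg (by omega)]
          rw [zero_pow (by omega)]
          ring
      rw [Finset.sum_congr rfl this]
      have : f.coeff d = ∑ u ∈ B.support, coeff u B * (if u 0 = d then 1 else 0) := by
        rw [hf, Polynomial.finset_sum_coeff]
        apply Finset.sum_congr rfl
        intro u _
        rw [Polynomial.coeff_C_mul, Polynomial.coeff_X_pow]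
        simp [eq_comm]
      rw [← this, hcoeff]
  · -- nonconstant case : it has a root
    have hdeg : f.degree ≠ 0 := fun h =>
      hnd (Polynomial.natDegree_eq_zero_iff_degree_le_zero.mpr h.le)
    obtain ⟨t₀, ht₀⟩ := IsAlgClosed.exists_root f hdeg
    refine ⟨![t₀, 1], ?_, ?_⟩
    · intro h
      have := congr_fun h 1
      simp at this
    · rw [heval]; exact ht₀

/-- Restriction of a positive-degree form to a coordinate plane gives a nontrivial zero
supported in two chosen coordinates. -/
lemma plane_zero [IsAlgClosed k] {σ : Type*} [Fintype σ] [DecidableEq σ]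
    {q : MvPolynomial σ k} {d : ℕ} (hq : q.IsHomogeneous d) (hd : 1 ≤ d)
    {j₁ j₂ : σ} (hne : j₁ ≠ j₂) :
    ∃ s t : k, ¬(s = 0 ∧ t = 0) ∧
      eval (fun i => if i = j₁ then s else if i = j₂ then t else 0) q = 0 := by
  set g : σ → MvPolynomial (Fin 2) k :=
    fun i => if i = j₁ then X 0 else if i = j₂ then X 1 else 0 with hg
  have hghom : ∀ i, (g i).IsHomogeneous 1 := by
    intro i
    rw [hg]
    dsimp only
    split
    · exact isHomogeneous_X _ _
    · split
      · exact isHomogeneous_X _ _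
      · exact isHomogeneous_zero _ _ _
  have hB : (aeval g q).IsHomogeneous d := by
    have := hq.aeval g hghom
    rwa [one_mul] at this
  obtain ⟨z, hz0, hz⟩ := binary_zero (aeval g q) hB hd
  refine ⟨z 0, z 1, ?_, ?_⟩
  · intro ⟨h0, h1⟩
    apply hz0
    funext i
    match i with
    | 0 => exact h0
    | 1 => exact h1
  · rw [eval_aeval''] at hz
    have hfun : (fun i => if i = j₁ then z 0 else if i = j₂ then z 1 else 0)
        = (fun i => eval z (g i)) := by
      funext i
      rw [hg]
      dsimp only
      split
      · simp
      · split <;> simp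
    rw [hfun]
    exact hz



lemma eval_aeval_eq {σ τ : Type*} {y : τ → k} {g : σ → MvPolynomial τ k} {x : σ → k}
    (h : ∀ i, eval y (g i) = x i) (F : MvPolynomial σ k) :
    eval y (aeval g F) = eval x F := by
  rw [eval_aeval'']
  rw [show (fun i => eval y (g i)) = x from funext h]

/-- Evaluation of a quadratic form along the line `s • a + t • v`. -/
lemma line_eval {σ : Type*} [Fintype σ] {q : MvPolynomial σ k}
    (hq : q.IsHomogeneous 2) (a v : σ → k) (s t : k) :
    eval (fun i => s * a i + t * v i) q
      = s ^ 2 * eval a q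
        + (s * t) * (eval (fun i => a i + v i) q - eval a q - eval v q)
        + t ^ 2 * eval v q := by
  set g : σ → MvPolynomial (Fin 2) k := fun i => C (a i) * X 0 + C (v i) * X 1 with hgdef
  have hg : ∀ i, (g i).IsHomogeneous 1 := fun i =>
    (isHomogeneous_C_mul_X (a i) 0).add (isHomogeneous_C_mul_X (v i) 1)
  have hpsi : (aeval g q).IsHomogeneous 2 := by
    have := hq.aeval g hg; rwa [one_mul] at this
  have h1 : eval (fun i => s * a i + t * v i) q = eval ![s, t] (aeval g q) :=
    (eval_aeval_eq (fun i => by simp [hgdef]; ring) q).symm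
  have e10 : eval ![(1:k), 0] (aeval g q) = eval a q :=
    eval_aeval_eq (fun i => by simp [hgdef]) q
  have e01 : eval ![(0:k), 1] (aeval g q) = eval v q :=
    eval_aeval_eq (fun i => by simp [hgdef]) q
  have e11 : eval ![(1:k), 1] (aeval g q) = eval (fun i => a i + v i) q :=
    eval_aeval_eq (fun i => by simp [hgdef]) q
  rw [h1, quad_eval _ hpsi s t, e10, e01, e11]
  ring

/-- The polar form of a quadratic form, expressed via partial derivatives. -/
lemma polar_eq {σ : Type*} [Fintype σ] [DecidableEq σ] [Infinite k] {q : MvPolynomial σ k}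
    (hq : q.IsHomogeneous 2) (a w : σ → k) :
    ∑ j, eval a (pderiv j q) * w j
      = eval (fun i => a i + w i) q - eval a q - eval w q := by
  set g : σ → MvPolynomial (Fin 2) k := fun i => C (a i) * X 0 + C (w i) * X 1 with hgdef
  have hpsi_eq : (aeval g q) =
      C (eval a q) * X 0 ^ 2
        + C (eval (fun i => a i + w i) q - eval a q - eval w q) * (X 0 * X 1)
        + C (eval w q) * X 1 ^ 2 := by
    have hg : ∀ i, (g i).IsHomogeneous 1 := fun i =>
      (isHomogeneous_C_mul_X (a i) 0).add (isHomogeneous_C_mul_X (w i) 1)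
    have hpsi : (aeval g q).IsHomogeneous 2 := by
      have := hq.aeval g hg; rwa [one_mul] at this
    apply MvPolynomial.funext
    intro z
    have hz : z = ![z 0, z 1] := by
      funext j
      match j with
      | 0 => rfl
      | 1 => rfl
    rw [hz, quad_eval _ hpsi (z 0) (z 1)]
    have e10 : eval ![(1:k), 0] (aeval g q) = eval a q :=
      eval_aeval_eq (fun i => by simp [hgdef]) q
    have e01 : eval ![(0:k), 1] (aeval g q) = eval w q :=
      eval_aeval_eq (fun i => by simp [hgdef]) q
    have e11 : eval ![(1:k), 1] (aeval g q) = eval (fun i => a i + w i) q :=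
      eval_aeval_eq (fun i => by simp [hgdef]) q
    rw [e10, e01, e11]
    simp
    try ring
  have hd : pderiv 1 (aeval g q) = ∑ i, aeval g (pderiv i q) * C (w i) := by
    rw [chain_rule]
    apply Finset.sum_congr rfl
    intro i _
    congr 1
    rw [hgdef]
    simp [pderiv_C_mul, pderiv_X_of_ne, pderiv_X_self]
  have hval : eval ![(1:k), 0] (pderiv 1 (aeval g q))
      = ∑ j, eval a (pderiv j q) * w j := by
    rw [hd, map_sum]
    apply Finset.sum_congr rfl
    intro j _
    rw [map_mul, eval_C, eval_aeval_eq (x := a) (fun i => by simp [hgdef]) (pderiv j q)]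
  rw [hpsi_eq] at hval
  rw [← hval]
  simp [pderiv_C_mul, pderiv_X_of_ne, pderiv_X_self, pderiv_mul]

/-- Two quadratic forms in at least three variables over an algebraically closed field
have a common nontrivial zero. -/
lemma two_quadrics [IsAlgClosed k] {σ : Type*} [Fintype σ] [DecidableEq σ]
    (h3 : 3 ≤ Fintype.card σ) {q₁ q₂ : MvPolynomial σ k}
    (h₁ : q₁.IsHomogeneous 2) (h₂ : q₂.IsHomogeneous 2) :
    ∃ x : σ → k, x ≠ 0 ∧ eval x q₁ = 0 ∧ eval x q₂ = 0 := by
  classical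
  -- a nontrivial zero `a` of `q₁`
  obtain ⟨j₁, j₂, hj⟩ := Fintype.exists_pair_of_one_lt_card (by omega : 1 < Fintype.card σ)
  obtain ⟨s, t, hst, ha⟩ := plane_zero h₁ (by norm_num) hj
  set a : σ → k := fun i => if i = j₁ then s else if i = j₂ then t else 0 with hadef
  have ha0 : a ≠ 0 := by
    intro h
    apply hst
    constructor
    · have := congr_fun h j₁; simpa [hadef] using this
    · have := congr_fun h j₂
      simp [hadef, if_neg (Ne.symm hj)] at this
      exact this
  by_cases hQ2a : eval a q₂ = 0
  · exact ⟨a, ha0, ha, hQ2a⟩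
  obtain ⟨i₀, hi₀⟩ := Function.ne_iff.mp ha0
  simp only [Pi.zero_apply] at hi₀
  -- two coordinates different from i₀
  have hcard : 1 < (Finset.univ.erase i₀).card := by
    have : (Finset.univ.erase i₀).card = Fintype.card σ - 1 := by
      rw [Finset.card_erase_of_mem (Finset.mem_univ _), Finset.card_univ]
    omega
  obtain ⟨c₁, hc₁, c₂, hc₂, hcne⟩ := Finset.one_lt_card.mp hcard
  have hc₁i₀ : c₁ ≠ i₀ := (Finset.mem_erase.mp hc₁).1
  have hc₂i₀ : c₂ ≠ i₀ := (Finset.mem_erase.mp hc₂).1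
  -- the polar of q₁ at a, as a linear form
  set Dpoly : MvPolynomial σ k := ∑ j, C (eval a (pderiv j q₁)) * X j with hDdef
  have hDhom : Dpoly.IsHomogeneous 1 :=
    IsHomogeneous.sum _ _ _ fun j _ => isHomogeneous_C_mul_X _ _
  have hDeval : ∀ w : σ → k, eval w Dpoly
      = eval (fun i => a i + w i) q₁ - eval a q₁ - eval w q₁ := by
    intro w
    rw [hDdef, map_sum, ← polar_eq h₁ a w]
    apply Finset.sum_congr rfl
    intro j _
    simp
  -- the residual-intersection map P
  set P : (σ → k) → (σ → k) := fun w i => eval w q₁ * a i - eval w Dpoly * w i with hPdef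
  have hPzero : ∀ w, eval (P w) q₁ = 0 := by
    intro w
    have := line_eval h₁ a w (eval w q₁) (-(eval w Dpoly))
    have harg : (fun i => eval w q₁ * a i + -(eval w Dpoly) * w i) = P w := by
      funext i; rw [hPdef]; ring
    rw [harg] at this
    rw [this, hDeval w, ha]
    ring
  -- the quartic form g with g(w) = q₂ (P w)
  set f : σ → MvPolynomial σ k := fun i => C (a i) * q₁ - Dpoly * X i with hfdef
  have hfhom : ∀ i, (f i).IsHomogeneous 2 := by
    intro i
    rw [hfdef]
    exact ((h₁.C_mul (a i))).sub (hDhom.mul (isHomogeneous_X _ _))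
  set g : MvPolynomial σ k := aeval f q₂ with hgdef
  have hg4 : g.IsHomogeneous 4 := by
    have := h₂.aeval f hfhom
    rwa [show (2 * 2 : ℕ) = 4 from rfl] at this
  have hgeval : ∀ w, eval w g = eval (P w) q₂ := by
    intro w
    rw [hgdef, eval_aeval_eq (x := P w) (fun i => by rw [hfdef, hPdef]; simp; ring) q₂]
  -- a nontrivial zero of g supported away from i₀
  obtain ⟨s', t', hst', hw⟩ := plane_zero hg4 (by norm_num) hcne
  set w₀ : σ → k := fun i => if i = c₁ then s' else if i = c₂ then t' else 0 with hwdef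
  have hw₀i₀ : w₀ i₀ = 0 := by
    rw [hwdef]
    dsimp only
    rw [if_neg (show ¬ i₀ = c₁ from fun h => hc₁i₀ h.symm),
      if_neg (show ¬ i₀ = c₂ from fun h => hc₂i₀ h.symm)]
  have hw₀0 : w₀ ≠ 0 := by
    intro h
    apply hst'
    constructor
    · have := congr_fun h c₁; simpa [hwdef] using this
    · have := congr_fun h c₂
      simp [hwdef, if_neg (Ne.symm hcne)] at this
      exact this
  have hQ2P : eval (P w₀) q₂ = 0 := by rw [← hgeval]; exact hw
  by_cases hP0 : P w₀ = 0
  · -- degenerate case: the line through a and w₀ lies in {q₁ = 0}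
    have hQ1w : eval w₀ q₁ = 0 := by
      have := congr_fun hP0 i₀
      rw [hPdef] at this
      simp [hw₀i₀] at this
      rcases this with h | h
      · exact h
      · exact absurd h hi₀
    have hDw : eval w₀ Dpoly = 0 := by
      obtain ⟨i₁, hi₁⟩ := Function.ne_iff.mp hw₀0
      simp only [Pi.zero_apply] at hi₁
      have := congr_fun hP0 i₁
      rw [hPdef] at this
      simp [hQ1w] at this
      rcases this with h | h
      · exact h
      · exact absurd h hi₁
    -- q₂ restricted to the line a + t • w₀
    set D₂ : k := eval (fun i => a i + w₀ i) q₂ - eval a q₂ - eval w₀ q₂ with hD₂def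
    by_cases hdeg : D₂ = 0 ∧ eval w₀ q₂ = 0
    · -- w₀ itself is a common zero
      exact ⟨w₀, hw₀0, hQ1w, hdeg.2⟩
    · -- find a root along the line
      set p : Polynomial k := Polynomial.C (eval a q₂) + Polynomial.C D₂ * Polynomial.X
          + Polynomial.C (eval w₀ q₂) * Polynomial.X ^ 2 with hpdef
      have hpdeg : p.degree ≠ 0 := by
        intro h
        have hnd : p.natDegree = 0 := Polynomial.natDegree_eq_zero_iff_degree_le_zero.mpr h.le
        have h1 : p.coeff 1 = D₂ := by rw [hpdef]; simp
        have h2 : p.coeff 2 = eval w₀ q₂ := by rw [hpdef]; simp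
        apply hdeg
        constructor
        · rw [← h1]; exact Polynomial.coeff_eq_zero_of_natDegree_lt (by omega)
        · rw [← h2]; exact Polynomial.coeff_eq_zero_of_natDegree_lt (by omega)
      obtain ⟨t₀, ht₀⟩ := IsAlgClosed.exists_root p hpdeg
      set z : σ → k := fun i => 1 * a i + t₀ * w₀ i with hzdef
      have hz0 : z ≠ 0 := by
        intro h
        have := congr_fun h i₀
        rw [hzdef] at this
        simp [hw₀i₀] at this
        exact hi₀ this
      refine ⟨z, hz0, ?_, ?_⟩
      · rw [hzdef, line_eval h₁ a w₀ 1 t₀, ← hDeval w₀, hDw, ha, hQ1w]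
        ring
      · rw [hzdef, line_eval h₂ a w₀ 1 t₀, ← hD₂def]
        have : Polynomial.eval t₀ p = 0 := ht₀
        rw [hpdef] at this
        simp at this
        linear_combination this
  · exact ⟨P w₀, hP0, hPzero w₀, hQ2P⟩

lemma degree_one_single {σ : Type*} {u : σ →₀ ℕ} (h : u.degree = 1) :
    ∃ i, u = Finsupp.single i 1 := by
  classical
  have hne : u ≠ 0 := by
    intro h0
    rw [h0] at h
    simp at h
  obtain ⟨i, hi⟩ := Finsupp.support_nonempty_iff.mpr hne
  have hui : u i ≤ u.degree := Finset.single_le_sum (fun j _ => Nat.zero_le _) hi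
  have hui1 : 1 ≤ u i := Nat.one_le_iff_ne_zero.mpr (Finsupp.mem_support_iff.mp hi)
  refine ⟨i, ?_⟩
  ext j
  rcases eq_or_ne j i with rfl | hne'
  · simp only [Finsupp.single_eq_same]; omega
  · rw [Finsupp.single_eq_of_ne' (Ne.symm hne')]
    by_contra hj
    have hjmem : j ∈ u.support := Finsupp.mem_support_iff.mpr hj
    have hpair : ({i, j} : Finset σ) ⊆ u.support := by
      intro x hx
      rcases Finset.mem_insert.mp hx with rfl | hx
      · exact hi
      · rwa [Finset.mem_singleton.mp hx]
    have hsum : u i + u j ≤ u.degree := by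
      rw [Finsupp.degree_apply]
      calc u i + u j = ∑ x ∈ ({i, j} : Finset σ), u x := by
            rw [Finset.sum_pair (Ne.symm hne')]
        _ ≤ ∑ x ∈ u.support, u x := Finset.sum_le_sum_of_subset hpair
    omega

lemma eval_linear {σ : Type*} [Fintype σ] {H : MvPolynomial σ k}
    (hH : H.IsHomogeneous 1) (x : σ → k) :
    eval x H = ∑ i, coeff (Finsupp.single i 1) H * x i := by
  classical
  have hsub : H.support ⊆ Finset.univ.image (fun i => Finsupp.single i 1) := by
    intro u hu
    obtain ⟨i, rfl⟩ := degree_one_single (degree_of_mem_support' hH hu)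
    exact Finset.mem_image.mpr ⟨i, Finset.mem_univ _, rfl⟩
  conv_lhs => rw [H.as_sum]
  rw [map_sum, Finset.sum_subset hsub (by
    intro u _ hu
    rw [notMem_support_iff.mp hu]
    simp)]
  rw [Finset.sum_image (fun i _ j _ h => Finsupp.single_left_injective one_ne_zero h)]
  apply Finset.sum_congr rfl
  intro i _
  rw [eval_monomial]
  congr 1
  rw [Finsupp.prod_single_index (by simp)]
  exact pow_one _

lemma linear_eq_zero {σ : Type*} {H : MvPolynomial σ k} (hH : H.IsHomogeneous 1)
    (h : ∀ i, coeff (Finsupp.single i 1) H = 0) : H = 0 := by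
  classical
  ext u
  rw [coeff_zero]
  by_cases hu : u.degree = 1
  · obtain ⟨i, rfl⟩ := degree_one_single hu
    exact h i
  · exact hH.coeff_eq_zero hu

lemma exists_coeff_single_ne_zero {σ : Type*} {H : MvPolynomial σ k}
    (hH : H.IsHomogeneous 1) (hne : H ≠ 0) :
    ∃ i, coeff (Finsupp.single i 1) H ≠ 0 := by
  by_contra h
  push_neg at h
  exact hne (linear_eq_zero hH h)

lemma nonunit_totalDegree_pos {σ : Type*} {p : MvPolynomial σ k}
    (hp : ¬ IsUnit p) (hp0 : p ≠ 0) : 1 ≤ p.totalDegree := by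
  by_contra h
  have h0 : p.totalDegree = 0 := by omega
  have hhom : p.IsHomogeneous 0 := (totalDegree_zero_iff_isHomogeneous (p := p)).mp h0
  have hpc : p = C (coeff 0 p) := by
    have := homogeneousComponent_of_mem (mem_homogeneousSubmodule 0 p |>.mpr hhom)
      (m := 0)
    rw [if_pos rfl] at this
    conv_lhs => rw [← this]
    rw [homogeneousComponent_zero]
  have hc0 : coeff 0 p ≠ 0 := fun hc => hp0 (by rw [hpc, hc, map_zero])
  apply hp
  rw [hpc]
  exact isUnit_iff_exists_inv.mpr ⟨C (coeff 0 p)⁻¹,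
    by rw [← map_mul, mul_inv_cancel₀ hc0, map_one]⟩

/-- If a homogeneous cubic is not squarefree, it is singular along a hyperplane. -/
lemma exists_singular_hyperplane {σ : Type*} [Fintype σ] [DecidableEq σ] [Nonempty σ]
    {G : MvPolynomial σ k} (hG : G.IsHomogeneous 3) (hsq : ¬ Squarefree G) :
    ∃ H : MvPolynomial σ k, H.IsHomogeneous 1 ∧ H ≠ 0 ∧
      ∀ y : σ → k, eval y H = 0 → eval y G = 0 ∧ ∀ j, eval y (pderiv j G) = 0 := by
  rw [Squarefree] at hsq
  push_neg at hsq
  obtain ⟨p, hpdvd, hpu⟩ := hsq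
  by_cases hG0 : G = 0
  · refine ⟨X (Classical.arbitrary σ), isHomogeneous_X _ _, X_ne_zero _, ?_⟩
    intro y _
    simp [hG0]
  · obtain ⟨q, hq⟩ := hpdvd
    have hp0 : p ≠ 0 := fun h => hG0 (by rw [hq, h]; ring)
    have hq0 : q ≠ 0 := fun h => hG0 (by rw [hq, h]; ring)
    have hGps : G = p * (p * q) := by rw [hq]; ring
    obtain ⟨hfac1, hdeg1⟩ := homogeneous_factor hG hG0 hGps
    have hle : (p * q).totalDegree ≤ p.totalDegree + q.totalDegree := totalDegree_mul p q
    have hdeq : (p * q).totalDegree = p.totalDegree + q.totalDegree := by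
      rcases eq_or_lt_of_le hle with he | hlt
      · exact he
      · exfalso
        have h0 : homogeneousComponent (p.totalDegree + q.totalDegree) (p * q) = 0 :=
          MvPolynomial.homogeneousComponent_eq_zero _ _ hlt
        rw [top_mul p q] at h0
        exact mul_ne_zero (top_ne_zero hp0) (top_ne_zero hq0) h0
    have htop : homogeneousComponent (p * q).totalDegree (p * q)
        = homogeneousComponent p.totalDegree p * homogeneousComponent q.totalDegree q := by
      rw [hdeq]; exact top_mul p q
    have hdp1 : p.totalDegree = 1 := by
      have := nonunit_totalDegree_pos hpu hp0
      omega
    set H := homogeneousComponent p.totalDegree p with hHdef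
    have hGfact : G = H * H * homogeneousComponent q.totalDegree q := by
      rw [hfac1, htop]; ring
    refine ⟨H, hdp1 ▸ homogeneousComponent_isHomogeneous p.totalDegree p, top_ne_zero hp0, ?_⟩
    intro y hy
    constructor
    · rw [hGfact]
      simp [hy]
    · intro j
      rw [hGfact, pderiv_mul, pderiv_mul]
      simp [hy]

end SmoothCubicAux

open SmoothCubicAux

/-- Let `k` be an algebraically closed field, `n ≥ 5`, and `F` a cubic form
defining a smooth cubic hypersurface in `P^n`.  Then the intersection of `{F = 0}` with any two
hyperplanes `{L₁ = 0}`, `{L₂ = 0}` (for linearly independent linear forms `L₁, L₂`) is reduced: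
the restriction of `F` along any linear parametrization `ι : k^{n-1} → {L₁ = L₂ = 0}`
(given by a matrix `A` inducing an injective linear map with image inside `{L₁ = L₂ = 0}`)
is a squarefree cubic form. -/
theorem smooth_cubic_intersection_two_hyperplanes_reduced
    (k : Type) [Field k] [IsAlgClosed k]
    (n : ℕ) (hn : 5 ≤ n)
    (F : MvPolynomial (Fin (n + 1)) k) (hF : F.IsHomogeneous 3)
    (hsmooth : ¬ ∃ a : Fin (n + 1) → k, a ≠ 0 ∧ eval a F = 0 ∧
      ∀ i, eval a (pderiv i F) = 0)
    (L₁ L₂ : MvPolynomial (Fin (n + 1)) k)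
    (hL₁ : L₁.IsHomogeneous 1) (hL₂ : L₂.IsHomogeneous 1)
    (hind : LinearIndependent k ![L₁, L₂])
    (A : Matrix (Fin (n + 1)) (Fin (n - 1)) k)
    (hinj : Function.Injective A.mulVec)
    (himage : ∀ y : Fin (n - 1) → k, eval (A.mulVec y) L₁ = 0 ∧ eval (A.mulVec y) L₂ = 0) :
    Squarefree ((aeval fun i => ∑ j, C (A i j) * X j : MvPolynomial (Fin (n + 1)) k →ₐ[k]
      MvPolynomial (Fin (n - 1)) k) F) := by
  classical
  by_contra hsq
  apply hsmooth
  set gA : Fin (n + 1) → MvPolynomial (Fin (n - 1)) k := fun i => ∑ j, C (A i j) * X j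
    with hgAdef
  set G : MvPolynomial (Fin (n - 1)) k := aeval gA F with hGdef
  have hgAhom : ∀ i, (gA i).IsHomogeneous 1 :=
    fun i => IsHomogeneous.sum _ _ _ fun j _ => isHomogeneous_C_mul_X _ _
  have hGhom : G.IsHomogeneous 3 := by
    have := hF.aeval gA hgAhom
    rwa [one_mul] at this
  haveI : Nonempty (Fin (n - 1)) := ⟨⟨0, by omega⟩⟩
  obtain ⟨H, hH1, hHne, hsing⟩ := exists_singular_hyperplane hGhom hsq
  -- coefficient vectors of the linear forms
  set l1 : Fin (n + 1) → k := fun i => coeff (Finsupp.single i 1) L₁ with hl1def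
  set l2 : Fin (n + 1) → k := fun i => coeff (Finsupp.single i 1) L₂ with hl2def
  -- linear independence of the coefficient vectors
  have hpairvec : ∀ α β : k, (∀ i, α * l1 i + β * l2 i = 0) → α = 0 ∧ β = 0 := by
    intro α β hcomb
    have hP : α • L₁ + β • L₂ = 0 := by
      have hPhom : (C α * L₁ + C β * L₂).IsHomogeneous 1 :=
        (hL₁.C_mul α).add (hL₂.C_mul β)
      have := linear_eq_zero hPhom (fun i => by
        rw [coeff_add, coeff_C_mul, coeff_C_mul]
        exact hcomb i)
      rw [smul_eq_C_mul, smul_eq_C_mul]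
      exact this
    exact LinearIndependent.pair_iff.mp hind α β hP
  have hl1ne : l1 ≠ 0 := by
    intro h
    have hL10 : L₁ = 0 := linear_eq_zero hL₁ (fun i => congr_fun h i)
    exact hind.ne_zero 0 (by simpa using hL10)
  obtain ⟨i₁, hi₁⟩ := Function.ne_iff.mp hl1ne
  simp only [Pi.zero_apply] at hi₁
  set l2' : Fin (n + 1) → k := fun i => l2 i - (l2 i₁ / l1 i₁) * l1 i with hl2'def
  have hl2'i₁ : l2' i₁ = 0 := by
    have h0 : l2' i₁ = l2 i₁ - l2 i₁ / l1 i₁ * l1 i₁ := rfl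
    rw [h0, div_mul_cancel₀ _ hi₁, sub_self]
  have hl2'ne : l2' ≠ 0 := by
    intro h
    have := hpairvec (-(l2 i₁ / l1 i₁)) 1 (fun i => by
      have h2 : l2 i - l2 i₁ / l1 i₁ * l1 i = 0 := congr_fun h i
      linear_combination h2)
    exact one_ne_zero this.2
  obtain ⟨i₂, hi₂⟩ := Function.ne_iff.mp hl2'ne
  simp only [Pi.zero_apply] at hi₂
  -- the two quadrics: restrictions of the partial derivatives ∂_{i₁} F, ∂_{i₂} F
  set Q1 : MvPolynomial (Fin (n - 1)) k := aeval gA (pderiv i₁ F) with hQ1def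
  set Q2 : MvPolynomial (Fin (n - 1)) k := aeval gA (pderiv i₂ F) with hQ2def
  have hQ1hom : Q1.IsHomogeneous 2 := by
    have := (pderiv_isHomogeneous (d := 2) hF i₁).aeval gA hgAhom
    rwa [one_mul] at this
  have hQ2hom : Q2.IsHomogeneous 2 := by
    have := (pderiv_isHomogeneous (d := 2) hF i₂).aeval gA hgAhom
    rwa [one_mul] at this
  -- parametrize the hyperplane {H = 0}
  obtain ⟨is, hcis⟩ := exists_coeff_single_ne_zero hH1 hHne
  set c : k := coeff (Finsupp.single is 1) H with hcdef
  set σ' : Type := {i : Fin (n - 1) // i ≠ is} with hσ'def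
  have hcard : 3 ≤ Fintype.card σ' := by
    have h1 : Fintype.card σ' = Fintype.card (Fin (n - 1))
        - Fintype.card {i : Fin (n - 1) // i = is} := by
      convert Fintype.card_subtype_compl (fun i : Fin (n - 1) => i = is) using 2
    rw [Fintype.card_subtype_eq, Fintype.card_fin] at h1
    omega
  set sub : Fin (n - 1) → MvPolynomial σ' k := fun i =>
    if h : i = is then
      C (-c⁻¹) * (∑ j : σ', C (coeff (Finsupp.single j.1 1) H) * X j)
    else X ⟨i, h⟩ with hsubdef
  have hsubhom : ∀ i, (sub i).IsHomogeneous 1 := by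
    intro i
    rw [hsubdef]
    dsimp only
    split
    · exact (IsHomogeneous.sum _ _ _ fun j _ => isHomogeneous_C_mul_X _ _).C_mul _
    · exact isHomogeneous_X _ _
  have hyH : ∀ w : σ' → k, eval (fun i => eval w (sub i)) H = 0 := by
    intro w
    rw [eval_linear hH1]
    have hsplit : ∑ i, coeff (Finsupp.single i 1) H * eval w (sub i)
        = (∑ i ∈ Finset.univ.erase is, coeff (Finsupp.single i 1) H * eval w (sub i))
          + c * eval w (sub is) := by
      rw [Finset.sum_erase_add _ _ (Finset.mem_univ is)]
    rw [hsplit]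
    have hterm : eval w (sub is) = -c⁻¹ * ∑ j : σ', coeff (Finsupp.single j.1 1) H * w j := by
      rw [hsubdef]
      dsimp only
      rw [dif_pos rfl]
      simp
    have hrest : ∑ i ∈ Finset.univ.erase is, coeff (Finsupp.single i 1) H * eval w (sub i)
        = ∑ j : σ', coeff (Finsupp.single j.1 1) H * w j := by
      rw [Finset.sum_subtype (Finset.univ.erase is)
        (fun x => ⟨fun h => (Finset.mem_erase.mp h).1,
          fun h => Finset.mem_erase.mpr ⟨h, Finset.mem_univ _⟩⟩)
        (fun i => coeff (Finsupp.single i 1) H * eval w (sub i))]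
      apply Finset.sum_congr rfl
      intro j _
      congr 1
      rw [hsubdef]
      dsimp only
      rw [dif_neg j.2]
      simp
    rw [hterm, hrest]
    field_simp
    ring
  -- the restricted quadrics and their common zero
  have hq1hom : (aeval sub Q1).IsHomogeneous 2 := by
    have := hQ1hom.aeval sub hsubhom
    rwa [one_mul] at this
  have hq2hom : (aeval sub Q2).IsHomogeneous 2 := by
    have := hQ2hom.aeval sub hsubhom
    rwa [one_mul] at this
  obtain ⟨w₀, hw₀ne, hw₀1, hw₀2⟩ := two_quadrics hcard hq1hom hq2hom
  set y₀ : Fin (n - 1) → k := fun i => eval w₀ (sub i) with hy₀def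
  have hy₀H : eval y₀ H = 0 := hyH w₀
  have hy₀ne : y₀ ≠ 0 := by
    obtain ⟨j, hj⟩ := Function.ne_iff.mp hw₀ne
    simp only [Pi.zero_apply] at hj
    intro h
    apply hj
    have := congr_fun h j.1
    rw [hy₀def] at this
    simp only [Pi.zero_apply] at this
    rw [hsubdef] at this
    dsimp only at this
    rw [dif_neg j.2] at this
    simpa using this
  set x₀ : Fin (n + 1) → k := A.mulVec y₀ with hx₀def
  have hAy : ∀ i, eval y₀ (gA i) = x₀ i := by
    intro i
    rw [hgAdef, hx₀def]
    simp [Matrix.mulVec, dotProduct]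
  have hx₀ne : x₀ ≠ 0 := by
    intro h
    apply hy₀ne
    apply hinj
    rw [← hx₀def, h, Matrix.mulVec_zero]
  obtain ⟨hGy₀, hGdy₀⟩ := hsing y₀ hy₀H
  have hFx₀ : eval x₀ F = 0 := by
    rw [← eval_aeval_eq hAy F, ← hGdef]
    exact hGy₀
  -- the gradient of F at x₀
  set d : Fin (n + 1) → k := fun i => eval x₀ (pderiv i F) with hddef
  have hpdgA : ∀ i j, pderiv j (gA i) = C (A i j) := by
    intro i j
    rw [hgAdef]
    dsimp only
    rw [map_sum]
    rw [Finset.sum_eq_single j]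
    · rw [pderiv_C_mul, pderiv_X_self, mul_one]
    · intro j' _ hj'
      rw [pderiv_C_mul, pderiv_X_of_ne hj', mul_zero]
    · intro h
      exact absurd (Finset.mem_univ j) h
  have hvec : ∀ j, ∑ i, d i * A i j = 0 := by
    intro j
    have h0 := hGdy₀ j
    rw [hGdef, chain_rule gA F j, map_sum] at h0
    rw [← h0]
    apply Finset.sum_congr rfl
    intro i _
    rw [map_mul, hpdgA i j, eval_C, eval_aeval_eq hAy (pderiv i F), hddef]
  have hd1 : d i₁ = 0 := by
    rw [hddef]
    dsimp only
    rw [← eval_aeval_eq hAy (pderiv i₁ F), ← hQ1def,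
      ← eval_aeval_eq (y := w₀) (g := sub) (x := y₀) (fun i => rfl) Q1]
    exact hw₀1
  have hd2 : d i₂ = 0 := by
    rw [hddef]
    dsimp only
    rw [← eval_aeval_eq hAy (pderiv i₂ F), ← hQ2def,
      ← eval_aeval_eq (y := w₀) (g := sub) (x := y₀) (fun i => rfl) Q2]
    exact hw₀2
  -- the gradient lies in the span of l1, l2
  set T' : (Fin (n + 1) → k) →ₗ[k] (Fin (n - 1) → k) := Matrix.mulVecLin A.transpose with hT'def
  have hT'app : ∀ v : Fin (n + 1) → k, ∀ j, T' v j = ∑ i, v i * A i j := by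
    intro v j
    rw [hT'def, Matrix.mulVecLin_apply]
    simp [Matrix.mulVec, dotProduct, Matrix.transpose_apply, mul_comm]
  have hdker : T' d = 0 := by
    funext j
    rw [hT'app d j, hvec j]
    rfl
  have hlker : ∀ (L : MvPolynomial (Fin (n + 1)) k), L.IsHomogeneous 1 →
      (∀ y : Fin (n - 1) → k, eval (A.mulVec y) L = 0) →
      T' (fun i => coeff (Finsupp.single i 1) L) = 0 := by
    intro L hL hLim
    funext j
    rw [hT'app]
    simp only [Pi.zero_apply]
    have h0 := hLim (Pi.single j 1)
    rw [eval_linear hL] at h0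
    rw [← h0]
    apply Finset.sum_congr rfl
    intro i _
    congr 1
    rw [Matrix.mulVec_single]
    exact (mul_one _).symm
  have hl1ker : T' l1 = 0 := hlker L₁ hL₁ (fun y => (himage y).1)
  have hl2ker : T' l2 = 0 := hlker L₂ hL₂ (fun y => (himage y).2)
  have hli2 : LinearIndependent k ![l1, l2] := by
    rw [LinearIndependent.pair_iff]
    intro s t hst
    apply hpairvec s t
    intro i
    have := congr_fun hst i
    simpa using this
  -- dimension count: ker T' = span {l1, l2}
  have hrange : Set.range ![l1, l2] = {l1, l2} := by
    ext x
    constructor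
    · rintro ⟨i, rfl⟩
      fin_cases i
      · exact Set.mem_insert _ _
      · exact Set.mem_insert_iff.mpr (Or.inr rfl)
    · rintro (rfl | rfl)
      · exact ⟨0, rfl⟩
      · exact ⟨1, rfl⟩
  set S : Submodule k (Fin (n + 1) → k) := Submodule.span k {l1, l2} with hSdef
  have hSle : S ≤ LinearMap.ker T' := by
    rw [hSdef, Submodule.span_le]
    rintro x (rfl | rfl)
    · exact LinearMap.mem_ker.mpr hl1ker
    · exact LinearMap.mem_ker.mpr hl2ker
  have hfrS : Module.finrank k S = 2 := by
    rw [hSdef, ← hrange, finrank_span_eq_card hli2]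
    simp
  have hinjlin : Function.Injective (Matrix.mulVecLin A) := by
    intro x y h
    apply hinj
    rw [← Matrix.mulVecLin_apply, ← Matrix.mulVecLin_apply, h]
  have hrankA : A.rank = n - 1 := by
    rw [Matrix.rank, LinearMap.finrank_range_of_inj hinjlin, Module.finrank_fin_fun]
  have hfrker : Module.finrank k (LinearMap.ker T') = 2 := by
    have h1 := LinearMap.finrank_range_add_finrank_ker T'
    have h2 : Module.finrank k (LinearMap.range T') = n - 1 := by
      have : A.transpose.rank = Module.finrank k (LinearMap.range T') := rfl
      rw [← this, Matrix.rank_transpose, hrankA]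
    rw [h2, Module.finrank_fin_fun] at h1
    omega
  have hSeq : S = LinearMap.ker T' :=
    Submodule.eq_of_le_of_finrank_le hSle (by rw [hfrker, hfrS])
  have hdS : d ∈ S := by
    rw [hSeq]
    exact LinearMap.mem_ker.mpr hdker
  obtain ⟨α, β, hαβ⟩ := Submodule.mem_span_pair.mp hdS
  -- finally : the gradient vanishes
  have hαβ' : ∀ i, α * l1 i + β * l2 i = d i := fun i => by
    have := congr_fun hαβ i
    simpa using this
  have hβ : β = 0 := by
    have e1 : α * l1 i₁ + β * l2 i₁ = 0 := by rw [hαβ' i₁, hd1]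
    have e2 : α * l1 i₂ + β * l2 i₂ = 0 := by rw [hαβ' i₂, hd2]
    have hl2e : l2 i₁ = (l2 i₁ / l1 i₁) * l1 i₁ := by
      rw [div_mul_cancel₀ _ hi₁]
    have hα' : (α + β * (l2 i₁ / l1 i₁)) * l1 i₁ = 0 := by
      rw [add_mul, mul_assoc, ← hl2e]
      linear_combination e1
    have hα'0 : α + β * (l2 i₁ / l1 i₁) = 0 := by
      rcases mul_eq_zero.mp hα' with h | h
      · exact h
      · exact absurd h hi₁
    have e2' : (α + β * (l2 i₁ / l1 i₁)) * l1 i₂ + β * l2' i₂ = 0 := by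
      rw [hl2'def]
      dsimp only
      linear_combination e2
    rw [hα'0, zero_mul, zero_add] at e2'
    rcases mul_eq_zero.mp e2' with h | h
    · exact h
    · exact absurd h hi₂
  have hα : α = 0 := by
    have e1 : α * l1 i₁ + β * l2 i₁ = 0 := by rw [hαβ' i₁, hd1]
    rw [hβ, zero_mul, add_zero] at e1
    rcases mul_eq_zero.mp e1 with h | h
    · exact h
    · exact absurd h hi₁
  have hd0 : ∀ i, eval x₀ (pderiv i F) = 0 := by
    intro i
    have := hαβ' i
    rw [hα, hβ] at this
    rw [hddef] at this
    simpa using this.symm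
  exact ⟨x₀, hx₀ne, hFx₀, hd0⟩
end

section
/- Let K be a field, L/K a Galois field extension of degree 2, and F ∈ K[X_0, …, X_m] (m ≥ 1) a cubic form. If F has a nontrivial zero in L^{m+1}, then F has a nontrivial zero in K^{m+1}. (In particular, a cubic hypersurface over K with a rational point over a quadratic Galois extension of K has a K-rational point.) -/
open MvPolynomial

private lemma eval_mul_of_isHomogeneous' {ι R : Type*} [Fintype ι] [CommRing R] {n : ℕ}
    {F : MvPolynomial ι R} (hF : F.IsHomogeneous n) (r : R) (x : ι → R) :
    eval (fun i => r * x i) F = r ^ n * eval x F := by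
  rw [eval_eq', eval_eq', Finset.mul_sum]
  refine Finset.sum_congr rfl fun e he => ?_
  have hd : e.degree = n := by
    rw [Finsupp.degree_eq_weight_one]
    exact hF (mem_support_iff.mp he)
  have hsum : ∑ i, e i = n := by
    rw [← hd, Finsupp.degree]
    exact (Finset.sum_subset (Finset.subset_univ _)
      (fun i _ hi => Finsupp.notMem_support_iff.mp hi)).symm
  calc coeff e F * ∏ i, (r * x i) ^ e i
      = coeff e F * ((∏ i, r ^ e i) * ∏ i, x i ^ e i) := by
        rw [← Finset.prod_mul_distrib]; simp_rw [mul_pow]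
    _ = r ^ n * (coeff e F * ∏ i, x i ^ e i) := by
        rw [Finset.prod_pow_eq_pow_sum, hsum]; ring

/-- A cubic form over a field `K` with a nontrivial zero over a quadratic
Galois extension `L` of `K` has a nontrivial zero over `K`. -/
theorem cubic_form_zero_descends_quadratic_extension
    (K L : Type) [Field K] [Field L] [Algebra K L] [IsGalois K L]
    (hdeg : Module.finrank K L = 2)
    (m : ℕ) (hm : 1 ≤ m)
    (F : MvPolynomial (Fin (m + 1)) K) (hF : F.IsHomogeneous 3)
    (hzero : ∃ a : Fin (m + 1) → L, a ≠ 0 ∧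
      eval a (MvPolynomial.map (algebraMap K L) F) = 0) :
    ∃ a : Fin (m + 1) → K, a ≠ 0 ∧ eval a F = 0 := by
  classical
  obtain ⟨a, ha0, haF⟩ := hzero
  set φ := algebraMap K L with hφ
  rw [eval_map] at haF
  -- Galois group setup
  have hfd : FiniteDimensional K L := FiniteDimensional.of_finrank_eq_succ hdeg
  have hcard : Nat.card (L ≃ₐ[K] L) = 2 := by
    rw [IsGalois.card_aut_eq_finrank, hdeg]
  obtain ⟨σ, hσ1, hσu⟩ := (Nat.card_eq_two_iff' (1 : L ≃ₐ[K] L)).mp hcard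
  have hσσ : ∀ x : L, σ (σ x) = x := by
    have h2 : σ * σ = 1 := by
      by_contra h
      exact hσ1 (mul_left_cancel ((hσu _ h).trans (mul_one σ).symm))
    intro x
    have := congrArg (fun g : L ≃ₐ[K] L => g x) h2
    simpa using this
  have hfix : ∀ x : L, σ x = x → ∃ k : K, φ k = x := by
    intro x hx
    have hmem : x ∈ IntermediateField.fixedField (⊤ : Subgroup (L ≃ₐ[K] L)) := by
      rintro ⟨g, -⟩
      rcases eq_or_ne g 1 with h | h
      · simp [h, AlgEquiv.smul_def]
      · rw [hσu g h]; exact hx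
    have hbot : IntermediateField.fixedField (⊤ : Subgroup (L ≃ₐ[K] L)) = ⊥ := by
      rw [← IntermediateField.fixingSubgroup_bot (F := K) (E := L), IsGalois.fixedField_fixingSubgroup]
    rw [hbot, IntermediateField.mem_bot] at hmem
    exact hmem
  -- key descent step: a nonzero zero of F over L on a σ-stable line gives a K-zero
  have key : ∀ (u : Fin (m+1) → L) (lam : L), u ≠ 0 → (∀ j, σ (u j) = lam * u j) →
      eval₂ φ u F = 0 → ∃ a : Fin (m + 1) → K, a ≠ 0 ∧ eval a F = 0 := by
    intro u lam hu hlam huF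
    obtain ⟨i, hi⟩ := Function.ne_iff.mp hu
    have hi : u i ≠ 0 := hi
    have hlamne : lam ≠ 0 := by
      have h0 : lam * u i ≠ 0 := by
        rw [← hlam i]
        intro h
        exact hi (σ.injective (by rw [h, map_zero]))
      exact left_ne_zero_of_mul h0
    set w : Fin (m+1) → L := fun j => (u i)⁻¹ * u j with hw
    have hwfix : ∀ j, σ (w j) = w j := by
      intro j
      rw [hw]
      simp only
      rw [map_mul, map_inv₀, hlam i, hlam j, mul_inv]
      field_simp
    choose c hc using fun j => hfix _ (hwfix j)
    refine ⟨c, ?_, ?_⟩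
    · intro h0
      have h1 : φ (c i) = 1 := by rw [hc]; simp [hw, inv_mul_cancel₀ hi]
      rw [h0] at h1
      simp at h1
    · have h1 : φ (eval c F) = eval₂ φ (φ ∘ c) F := by
        rw [← eval₂_id (g := c) F, eval₂_comp_left φ, RingHom.comp_id]
      have h2 : (φ ∘ c) = w := funext hc
      have h3 : eval₂ φ w F = 0 := by
        rw [← eval_map, hw]
        rw [eval_mul_of_isHomogeneous' (hF.map φ) (u i)⁻¹ u, eval_map, huF, mul_zero]
      have h4 : φ (eval c F) = 0 := by rw [h1, h2, h3]
      exact (map_eq_zero_iff φ (algebraMap K L).injective).mp h4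
  -- the binary cubic form P(s,t) = F(s·a + t·σ(a))
  set b : Fin (m+1) → L := fun j => σ (a j) with hb
  have hab : ∀ j, σ (b j) = a j := fun j => hσσ _
  set g : Fin (m+1) → MvPolynomial (Fin 2) L :=
    fun j => C (a j) * X 0 + C (b j) * X 1 with hg
  set P : MvPolynomial (Fin 2) L := eval₂ ((C : L →+* MvPolynomial (Fin 2) L).comp φ) g F with hP
  have hPhom : P.IsHomogeneous 3 := by
    have := hF.eval₂ ((C : L →+* MvPolynomial (Fin 2) L).comp φ) g
      (fun r => isHomogeneous_C _ _)
      (fun j => isHomogeneous_C_mul_X _ _ |>.add (isHomogeneous_C_mul_X _ _))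
    simpa using this
  have hPeval : ∀ v : Fin 2 → L, eval v P = eval₂ φ (fun j => a j * v 0 + b j * v 1) F := by
    intro v
    rw [hP, eval₂_comp_left (eval v)]
    congr 1
    · ext r; simp [eval_C]
    · funext j; simp [hg]
  -- the coefficients of P
  set d : ℕ → (Fin 2 →₀ ℕ) := fun k => Finsupp.single 0 (3-k) + Finsupp.single 1 k with hd
  have hdeg2 : ∀ e : Fin 2 →₀ ℕ, e.degree = e 0 + e 1 := by
    intro e
    rw [Finsupp.degree_apply,
      Finset.sum_subset (Finset.subset_univ _) (fun i _ hi => Finsupp.notMem_support_iff.mp hi),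
      Fin.sum_univ_two]
  have hd0 : ∀ k, (d k) 0 = 3 - k := by intro k; simp [hd, Finsupp.single_apply]
  have hd1 : ∀ k, (d k) 1 = k := by intro k; simp [hd, Finsupp.single_apply]
  have hPdec : P = ∑ k ∈ Finset.range 4, monomial (d k) (coeff (d k) P) := by
    apply MvPolynomial.ext
    intro e
    rw [coeff_sum]
    simp_rw [coeff_monomial]
    by_cases he : e.degree = 3
    · have h1 : e 1 ≤ 3 := le_trans (Finsupp.le_degree 1 e) he.le
      have he0 : e 0 = 3 - e 1 := by have := hdeg2 e; omega
      have hee : d (e 1) = e := by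
        ext i
        fin_cases i
        · show (d (e 1)) 0 = e 0
          rw [hd0]; exact he0.symm
        · show (d (e 1)) 1 = e 1
          exact hd1 _
      rw [Finset.sum_eq_single (e 1)]
      · rw [if_pos hee, hee]
      · intro k hk hne
        rw [if_neg]
        intro hde
        exact hne (by rw [← hd1 k, hde])
      · intro h; exact absurd (Finset.mem_range.mpr (by omega)) h
    · rw [hPhom.coeff_eq_zero he]
      symm
      apply Finset.sum_eq_zero
      intro k hk
      have hk' := Finset.mem_range.mp hk
      rw [if_neg]
      intro hde
      apply he
      rw [← hde, hdeg2, hd0, hd1]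
      omega
  have hEval : ∀ s t : L, eval ![s, t] P =
      ∑ k ∈ Finset.range 4, coeff (d k) P * s ^ (3-k) * t ^ k := by
    intro s t
    conv_lhs => rw [hPdec]
    rw [map_sum]
    refine Finset.sum_congr rfl fun k hk => ?_
    rw [eval_monomial, hd]
    rw [Finsupp.prod_add_index' (fun i => pow_zero _) (fun i b1 b2 => pow_add _ _ _)]
    simp [Finsupp.prod_single_index, mul_assoc]
  set cc : ℕ → L := fun k => coeff (d k) P with hcc
  -- σ swaps the two middle coefficients
  set σr : L →+* L := RingHomClass.toRingHom σ with hσr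
  set π : Fin 2 → Fin 2 := ⇑(Equiv.swap (0 : Fin 2) 1) with hπ
  set k : MvPolynomial (Fin 2) L →+* MvPolynomial (Fin 2) L :=
    (MvPolynomial.map σr).comp (rename π).toRingHom with hk
  have hkP : k P = P := by
    rw [hP, eval₂_comp_left k]
    congr 1
    · ext r
      simp only [hk, RingHom.coe_comp, Function.comp_apply, AlgHom.toRingHom_eq_coe,
        AlgHom.coe_toRingHom, rename_C, map_C]
      rw [hφ]
      simp [hσr, σ.commutes]
    · funext j
      simp only [hk, hg, RingHom.coe_comp, AlgHom.toRingHom_eq_coe, AlgHom.coe_toRingHom,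
        Function.comp_apply, map_add, map_mul, rename_C, rename_X, map_C, map_X, hπ,
        Equiv.swap_apply_left, Equiv.swap_apply_right]
      have hσr' : ∀ x, σr x = σ x := fun _ => rfl
      rw [hσr' (a j), hσr' (b j), hab j, show σ (a j) = b j from rfl]
      ring
  have hswap : σ (cc 1) = cc 2 := by
    have hmd : Finsupp.mapDomain π (d 1) = d 2 := by
      rw [hd]
      simp only [Finsupp.mapDomain_add, Finsupp.mapDomain_single, hπ,
        Equiv.swap_apply_left, Equiv.swap_apply_right]
      rw [add_comm]
    calc σ (cc 1) = coeff (d 2) (k P) := by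
          rw [hk]
          simp only [RingHom.coe_comp, Function.comp_apply, AlgHom.toRingHom_eq_coe,
            AlgHom.coe_toRingHom, coeff_map]
          rw [← hmd, coeff_rename_mapDomain π (Equiv.injective _) _ (d 1)]
          rfl
      _ = cc 2 := by rw [hkP]
  have hswap' : σ (cc 2) = cc 1 := by rw [← hswap, hσσ]
  -- F(b) = 0
  have hbF : eval₂ φ b F = 0 := by
    have h1 : σ (eval₂ φ a F) = eval₂ φ b F := by
      have := eval₂_comp_left σr φ a F
      have hc : σr.comp φ = φ := by ext r; exact σ.commutes r
      rw [hc] at this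
      exact this
    rw [← h1, haF, map_zero]
  -- the outer coefficients vanish
  have hc0 : cc 0 = 0 := by
    have h1 := hPeval ![1, 0]
    rw [hEval 1 0] at h1
    have h2 : eval₂ φ (fun j => a j * (![1,0] : Fin 2 → L) 0 + b j * (![1,0] : Fin 2 → L) 1) F
        = eval₂ φ a F := by
      apply congrArg (fun t => eval₂ φ t F)
      funext j; simp
    rw [h2, haF] at h1
    rw [hcc]
    simp only [Finset.sum_range_succ, Finset.sum_range_zero] at h1
    norm_num at h1
    exact h1
  have hc3 : cc 3 = 0 := by
    have h1 := hPeval ![0, 1]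
    rw [hEval 0 1] at h1
    have h2 : eval₂ φ (fun j => a j * (![0,1] : Fin 2 → L) 0 + b j * (![0,1] : Fin 2 → L) 1) F
        = eval₂ φ b F := by
      apply congrArg (fun t => eval₂ φ t F)
      funext j; simp
    rw [h2, hbF] at h1
    rw [hcc]
    simp only [Finset.sum_range_succ, Finset.sum_range_zero] at h1
    norm_num at h1
    exact h1
  -- the distinguished vector v = c₂·a − c₁·b
  set v : Fin (m+1) → L := fun j => cc 2 * a j - cc 1 * b j with hv
  have hσv : ∀ j, σ (v j) = (-1) * v j := by
    intro j
    rw [hv]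
    simp only
    rw [map_sub, map_mul, map_mul, hswap', hswap, show σ (a j) = b j from rfl, hab j]
    ring
  have hvF : eval₂ φ v F = 0 := by
    have h1 := hPeval ![cc 2, -(cc 1)]
    rw [hEval (cc 2) (-(cc 1))] at h1
    have h2 : eval₂ φ (fun j => a j * (![cc 2, -(cc 1)] : Fin 2 → L) 0
        + b j * (![cc 2, -(cc 1)] : Fin 2 → L) 1) F = eval₂ φ v F := by
      apply congrArg (fun t => eval₂ φ t F)
      funext j; simp [hv]; ring
    rw [h2] at h1
    rw [← h1]
    simp only [Finset.sum_range_succ, Finset.sum_range_zero]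
    rw [show (coeff (d 0) P : L) = cc 0 from rfl, show (coeff (d 1) P : L) = cc 1 from rfl,
      show (coeff (d 2) P : L) = cc 2 from rfl, show (coeff (d 3) P : L) = cc 3 from rfl,
      hc0, hc3]
    norm_num
    ring
  -- case analysis
  by_cases hv0 : v = 0
  · by_cases hc1 : cc 1 = 0
    · have hc2 : cc 2 = 0 := by rw [← hswap, hc1, map_zero]
      set u : Fin (m+1) → L := fun j => a j + b j with hu
      have huF : eval₂ φ u F = 0 := by
        have h1 := hPeval ![1, 1]
        rw [hEval 1 1] at h1
        have h2 : eval₂ φ (fun j => a j * (![1,1] : Fin 2 → L) 0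
            + b j * (![1,1] : Fin 2 → L) 1) F = eval₂ φ u F := by
          apply congrArg (fun t => eval₂ φ t F)
          funext j; simp [hu]
        rw [h2] at h1
        rw [← h1]
        simp only [Finset.sum_range_succ, Finset.sum_range_zero]
        rw [show (coeff (d 0) P : L) = cc 0 from rfl, show (coeff (d 1) P : L) = cc 1 from rfl,
          show (coeff (d 2) P : L) = cc 2 from rfl, show (coeff (d 3) P : L) = cc 3 from rfl,
          hc0, hc1, hc2, hc3]
        norm_num
      by_cases hu0 : u = 0
      · refine key a (-1) ha0 ?_ haF
        intro j
        have h0 : a j + b j = 0 := by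
          have := congrFun hu0 j
          simpa [hu] using this
        have hbj : b j = -a j := by linear_combination h0
        rw [show σ (a j) = b j from rfl, hbj]
        ring
      · refine key u 1 hu0 ?_ huF
        intro j
        rw [hu]
        simp only
        rw [map_add, show σ (a j) = b j from rfl, hab j]
        ring
    · refine key a ((cc 1)⁻¹ * cc 2) ha0 ?_ haF
      intro j
      have hvj : cc 2 * a j - cc 1 * b j = 0 := by
        have := congrFun hv0 j
        simpa [hv] using this
      rw [show σ (a j) = b j from rfl]
      field_simp
      linear_combination -hvj
  · exact key v (-1) hv0 hσv hvF
end

section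
/- Let K be a field of characteristic different from 2, L/K a Galois field extension of degree 3, and q a nondegenerate quadratic form in n+1 ≥ 3 variables over K (so that {q = 0} ⊂ P^n is a smooth quadric hypersurface of positive dimension). If q has a nontrivial zero in L^{n+1}, then q has a nontrivial zero in K^{n+1}. -/
open MvPolynomial Polynomial

section Aux
variable {K : Type} [Field K]

variable {K : Type} [Field K]

lemma aux_prod_pow_natDegree_le {ι : Type*} (s : Finset ι) (f : ι → K[X]) (m : ι → ℕ) (e : ℕ)
    (hf : ∀ i, (f i).natDegree ≤ e) :
    (∏ i ∈ s, f i ^ m i).natDegree ≤ (∑ i ∈ s, m i) * e := by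
  refine (Polynomial.natDegree_prod_le s _).trans ?_
  rw [Finset.sum_mul]
  exact Finset.sum_le_sum fun i _ =>
    (Polynomial.natDegree_pow_le).trans (by exact Nat.mul_le_mul_left _ (hf i))

lemma aux_coeff_prod_pow {ι : Type*} [DecidableEq ι] (s : Finset ι) (f : ι → K[X]) (m : ι → ℕ)
    (e : ℕ) (hf : ∀ i, (f i).natDegree ≤ e) :
    (∏ i ∈ s, f i ^ m i).coeff ((∑ i ∈ s, m i) * e) = ∏ i ∈ s, (f i).coeff e ^ m i := by
  induction s using Finset.induction with
  | empty => simp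
  | @insert a s ha ih =>
    rw [Finset.prod_insert ha, Finset.sum_insert ha, add_mul,
      Polynomial.coeff_mul_add_eq_of_natDegree_le
        ((Polynomial.natDegree_pow_le).trans (Nat.mul_le_mul_left _ (hf a)))
        (aux_prod_pow_natDegree_le s f m e hf),
      Polynomial.coeff_pow_of_natDegree_le (hf a), ih, Finset.prod_insert ha]

lemma aux_support_sum {N : Type*} [Fintype N] {q : MvPolynomial N K} {d : ℕ}
    (hq : q.IsHomogeneous d) {m : N →₀ ℕ} (hm : m ∈ q.support) : ∑ i, m i = d := by
  have h : (Finsupp.weight 1) m = d := hq (MvPolynomial.mem_support_iff.mp hm)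
  rw [show (Finsupp.weight 1) m = Finsupp.degree m by rw [Finsupp.degree_eq_weight_one]; rfl] at h
  rw [← h, Finsupp.degree]
  exact (Finset.sum_subset (Finset.subset_univ _)
    (fun i _ hi => Finsupp.notMem_support_iff.mp hi)).symm

lemma aux_aeval_natDegree_le {N : Type*} [Fintype N] [DecidableEq N] (q : MvPolynomial N K)
    {d : ℕ} (hq : q.IsHomogeneous d) (f : N → K[X]) (e : ℕ) (hf : ∀ i, (f i).natDegree ≤ e) :
    (MvPolynomial.aeval f q).natDegree ≤ d * e := by
  rw [MvPolynomial.aeval_def, MvPolynomial.eval₂_eq']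
  refine Polynomial.natDegree_sum_le_of_forall_le _ _ fun m hm => ?_
  refine Polynomial.natDegree_mul_le.trans ?_
  rw [Polynomial.algebraMap_eq, Polynomial.natDegree_C, zero_add]
  have := aux_prod_pow_natDegree_le Finset.univ f m e hf
  rwa [aux_support_sum hq hm] at this

lemma aux_aeval_coeff_top {N : Type*} [Fintype N] [DecidableEq N] (q : MvPolynomial N K)
    {d : ℕ} (hq : q.IsHomogeneous d) (f : N → K[X]) (e : ℕ) (hf : ∀ i, (f i).natDegree ≤ e) :
    (MvPolynomial.aeval f q).coeff (d * e) = MvPolynomial.eval (fun i => (f i).coeff e) q := by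
  rw [MvPolynomial.aeval_def, MvPolynomial.eval₂_eq', MvPolynomial.eval_eq',
    Polynomial.finset_sum_coeff]
  refine Finset.sum_congr rfl fun m hm => ?_
  rw [Polynomial.algebraMap_eq, Polynomial.coeff_C_mul, ← aux_support_sum hq hm,
    aux_coeff_prod_pow Finset.univ f m e hf]

lemma aux_aeval_mul_homog {N : Type*} [Fintype N] (q : MvPolynomial N K) {d : ℕ}
    (hq : q.IsHomogeneous d) (r : K[X]) (h : N → K[X]) :
    MvPolynomial.aeval (fun i => r * h i) q = r ^ d * MvPolynomial.aeval h q := by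
  rw [MvPolynomial.aeval_def, MvPolynomial.aeval_def, MvPolynomial.eval₂_eq',
    MvPolynomial.eval₂_eq', Finset.mul_sum]
  refine Finset.sum_congr rfl fun m hm => ?_
  simp only [mul_pow, Finset.prod_mul_distrib, Finset.prod_pow_eq_pow_sum,
    aux_support_sum hq hm]
  ring

lemma aux_eval_aeval {N : Type*} (q : MvPolynomial N K) (f : N → K[X]) (t : K) :
    (MvPolynomial.aeval f q).eval t = MvPolynomial.eval (fun i => (f i).eval t) q := by
  rw [MvPolynomial.aeval_def]
  have := MvPolynomial.eval₂_comp_left (Polynomial.evalRingHom t)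
    (algebraMap K K[X]) f q
  simp only [Polynomial.coe_evalRingHom] at this
  rw [this]
  congr 1
  ext x
  simp [Polynomial.algebraMap_eq]

end Aux

open MvPolynomial

/-- Over a field `K` of characteristic different from `2`, a nondegenerate
quadratic form in `n + 1 ≥ 3` variables with a nontrivial zero over a cubic Galois extension
`L` of `K` has a nontrivial zero over `K`.  (Nondegeneracy, in characteristic `≠ 2`, is
expressed by saying that the only vector at which all partial derivatives of `q` vanish is
the zero vector.) -/
theorem quadratic_form_zero_descends_cubic_extension
    (K L : Type) [Field K] [Field L] [Algebra K L] [IsGalois K L]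
    (hchar : ringChar K ≠ 2)
    (hdeg : Module.finrank K L = 3)
    (n : ℕ) (hn : 2 ≤ n)
    (q : MvPolynomial (Fin (n + 1)) K) (hq : q.IsHomogeneous 2)
    (hnd : ∀ a : Fin (n + 1) → K, (∀ i, eval a (pderiv i q) = 0) → a = 0)
    (hzero : ∃ a : Fin (n + 1) → L, a ≠ 0 ∧
      eval a (MvPolynomial.map (algebraMap K L) q) = 0) :
    ∃ a : Fin (n + 1) → K, a ≠ 0 ∧ eval a q = 0 := by
  classical
  obtain ⟨a, ha0, haz⟩ := hzero
  have hfd : FiniteDimensional K L := Module.finite_of_finrank_pos (by rw [hdeg]; norm_num)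
  obtain ⟨θ, hθ⟩ := Field.exists_primitive_element K L
  have hint : IsIntegral K θ := IsIntegral.of_finite K θ
  set p := minpoly K θ with hpdef
  have hpmonic : p.Monic := minpoly.monic hint
  have hpdeg : p.natDegree = 3 := by
    have h1 := IntermediateField.adjoin.finrank hint
    rw [hθ, IntermediateField.finrank_top', hdeg] at h1
    exact h1.symm
  have hp1 : p ≠ 1 := by intro h; rw [h] at hpdeg; simp at hpdeg
  have hsurj : ∀ b : L, ∃ g : Polynomial K, Polynomial.aeval θ g = b := by
    intro b
    have h1 : Algebra.adjoin K {θ} = ⊤ := by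
      have h2 := IntermediateField.adjoin_simple_toSubalgebra_of_isAlgebraic hint.isAlgebraic
      rw [hθ, IntermediateField.top_toSubalgebra] at h2
      exact h2.symm
    have h3 : b ∈ Algebra.adjoin K {θ} := h1 ▸ Algebra.mem_top
    rw [Algebra.adjoin_singleton_eq_range_aeval] at h3
    exact h3
  choose g hg using hsurj
  set f : Fin (n + 1) → Polynomial K := fun i => g (a i) %ₘ p with hfdef
  have hfθ : ∀ i, Polynomial.aeval θ (f i) = a i := by
    intro i
    conv_rhs => rw [← hg (a i), ← Polynomial.modByMonic_add_div (g (a i)) p]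
    rw [map_add, map_mul, hpdef, minpoly.aeval, zero_mul, add_zero]
  have hfdeg2 : ∀ i, (f i).natDegree ≤ 2 := by
    intro i
    have h1 := Polynomial.natDegree_modByMonic_lt (g (a i)) hpmonic hp1
    have h2 : f i = g (a i) %ₘ p := rfl
    rw [h2]
    omega
  have hfne : ∃ i, f i ≠ 0 := by
    obtain ⟨i, hi⟩ := Function.ne_iff.mp ha0
    exact ⟨i, fun h => hi (by rw [← hfθ i, h, map_zero]; rfl)⟩
  set e := Finset.univ.sup (fun i => (f i).natDegree) with hedef
  have hfe : ∀ i, (f i).natDegree ≤ e := fun i =>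
    Finset.le_sup (f := fun i => (f i).natDegree) (Finset.mem_univ i)
  have he2 : e ≤ 2 := Finset.sup_le fun i _ => hfdeg2 i
  set c := fun i => (f i).coeff e with hcdef
  have hc0 : c ≠ 0 := by
    obtain ⟨j, _, hj⟩ :=
      Finset.exists_mem_eq_sup Finset.univ Finset.univ_nonempty (fun i => (f i).natDegree)
    intro hc
    by_cases hfj : f j = 0
    · obtain ⟨i, hi⟩ := hfne
      have he0 : e = 0 := by rw [hedef, hj, hfj]; simp
      have h1 : (f i).coeff 0 = 0 := by simpa [hcdef, he0] using congrFun hc i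
      have h2 : f i = Polynomial.C ((f i).coeff 0) :=
        Polynomial.eq_C_of_natDegree_le_zero (he0 ▸ hfe i)
      rw [h1, map_zero] at h2
      exact hi h2
    · have h2 : (f j).coeff e = 0 := congrFun hc j
      rw [hedef, hj] at h2
      exact hfj (Polynomial.leadingCoeff_eq_zero.mp h2)
  set F := MvPolynomial.aeval f q with hFdef
  have hFdeg : F.natDegree ≤ 2 * e := aux_aeval_natDegree_le q hq f e hfe
  have hFc : F.coeff (2 * e) = MvPolynomial.eval c q := aux_aeval_coeff_top q hq f e hfe
  have h0 : Polynomial.aeval θ F = 0 := by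
    rw [hFdef, MvPolynomial.aeval_def]
    have hcl := MvPolynomial.eval₂_comp_left ((Polynomial.aeval θ : Polynomial K →ₐ[K] L) :
      Polynomial K →+* L) (algebraMap K (Polynomial K)) f q
    simp only [AlgHom.coe_toRingHom] at hcl
    rw [hcl]
    have hc1 : (((Polynomial.aeval θ : Polynomial K →ₐ[K] L) : Polynomial K →+* L).comp
        (algebraMap K (Polynomial K))) = algebraMap K L := by
      ext x
      simp [Polynomial.algebraMap_eq]
    rw [hc1]
    rw [MvPolynomial.eval₂_eq_eval_map]
    have hc2 : ⇑(Polynomial.aeval (R := K) θ) ∘ f = a := funext hfθ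
    rw [hc2]
    exact haz
  have hpF : p ∣ F := minpoly.dvd K θ h0
  by_cases hcq : MvPolynomial.eval c q = 0
  · exact ⟨c, hc0, hcq⟩
  have hF0 : F ≠ 0 := fun h => hcq (by rw [← hFc, h, Polynomial.coeff_zero])
  have h2e : 2 * e ≤ F.natDegree := Polynomial.le_natDegree_of_ne_zero (hFc ▸ hcq)
  have h3F : 3 ≤ F.natDegree := hpdeg ▸ Polynomial.natDegree_le_of_dvd hpF hF0
  have hFdeg' : F.natDegree = 2 * e := le_antisymm hFdeg h2e
  have he : e = 2 := by omega
  obtain ⟨G, hG⟩ := hpF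
  have hG0 : G ≠ 0 := by rintro rfl; rw [mul_zero] at hG; exact hF0 hG
  have hGdeg : G.natDegree = 1 := by
    have hnm := Polynomial.natDegree_mul (hpmonic.ne_zero) hG0
    rw [← hG, hFdeg', he, hpdeg] at hnm
    omega
  have hG1 : G.coeff 1 ≠ 0 := fun h =>
    hG0 (Polynomial.leadingCoeff_eq_zero.mp (by rwa [Polynomial.leadingCoeff, hGdeg]))
  set t := -(G.coeff 0 / G.coeff 1) with htdef
  have hGt : G.eval t = 0 := by
    conv_lhs => rw [Polynomial.eq_X_add_C_of_natDegree_le_one hGdeg.le]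
    simp only [Polynomial.eval_add, Polynomial.eval_mul, Polynomial.eval_C, Polynomial.eval_X,
      htdef]
    field_simp
    ring
  have hFt : F.eval t = 0 := by rw [hG, Polynomial.eval_mul, hGt, mul_zero]
  set b := fun i => (f i).eval t with hbdef
  have hbq : MvPolynomial.eval b q = 0 := by
    rw [hbdef, ← aux_eval_aeval q f t, ← hFdef]
    exact hFt
  by_cases hb0 : b = 0
  · exfalso
    have hdvd : ∀ i, (Polynomial.X - Polynomial.C t) ∣ f i := fun i =>
      Polynomial.dvd_iff_isRoot.mpr (congrFun hb0 i)
    choose h hh using hdvd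
    have hhdeg : ∀ i, (h i).natDegree ≤ 1 := by
      intro i
      by_cases hhi : h i = 0
      · simp [hhi]
      have hd : (f i).natDegree = 1 + (h i).natDegree := by
        rw [hh i, Polynomial.natDegree_mul (Polynomial.X_sub_C_ne_zero t) hhi,
          Polynomial.natDegree_X_sub_C]
      have := hfdeg2 i
      omega
    have hFeq : F = (Polynomial.X - Polynomial.C t) ^ 2 * MvPolynomial.aeval h q := by
      rw [hFdef]
      rw [show f = (fun i => (Polynomial.X - Polynomial.C t) * h i) from funext hh]
      exact aux_aeval_mul_homog q hq _ h
    have hprime : Prime p := (minpoly.irreducible hint).prime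
    have hndvd : ¬ p ∣ (Polynomial.X - Polynomial.C t) := by
      intro hd
      have := Polynomial.natDegree_le_of_dvd hd (Polynomial.X_sub_C_ne_zero t)
      rw [hpdeg, Polynomial.natDegree_X_sub_C] at this
      omega
    have hpH : p ∣ MvPolynomial.aeval h q := by
      have hdd : p ∣ (Polynomial.X - Polynomial.C t) ^ 2 * MvPolynomial.aeval h q := by
        rw [← hFeq]; exact ⟨G, hG⟩
      rcases hprime.dvd_mul.mp hdd with h1 | h1
      · exact absurd (hprime.dvd_of_dvd_pow h1) hndvd
      · exact h1
    have hH0 : MvPolynomial.aeval h q = 0 := by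
      by_contra hH
      have h1 := Polynomial.natDegree_le_of_dvd hpH hH
      have h2 := aux_aeval_natDegree_le q hq h 1 hhdeg
      omega
    exact hF0 (by rw [hFeq, hH0, mul_zero])
  · exact ⟨b, hb0, hbq⟩
end
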